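/- arXiv:1803.00351 — 4 statements merged into one kernel-verified Lean document; each statement's English description precedes it below -/
import Mathlib

section
/- Let 2 < p < ∞. If T: Y → X is an operator between Banach spaces whose adjoint T*: X* → Y* is p-convergent, then T is weakly precompact. -/
open Filter Topology Metric NormedSpace Bornology ENNReal

noncomputable section

section Defs
variable {X Y : Type*} [NormedAddCommGroup X] [NormedSpace ℝ X]
  [NormedAddCommGroup Y] [NormedSpace ℝ Y]

/-- A sequence `x` in `X` is weakly `p`-summable if `(f (x n))ₙ ∈ ℓ_p` for every
continuous linear functional `f`. -/
def WeaklyPSummable (p : ℝ≥0∞) (x : ℕ → X) : Prop :=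
  ∀ f : StrongDual ℝ X, Memℓp (fun n => f (x n)) p

/-- A sequence is norm null if its norms tend to `0`. -/
def NormNull (x : ℕ → X) : Prop :=
  Tendsto (fun n => ‖x n‖) atTop (𝓝 0)

/-- An operator is `p`-convergent if it maps weakly `p`-summable sequences to norm
null sequences. -/
def PConvergent (p : ℝ≥0∞) (T : X →L[ℝ] Y) : Prop :=
  ∀ x : ℕ → X, WeaklyPSummable p x → NormNull fun n => T (x n)

/-- The adjoint (dual) operator `T* : Y* → X*`, `g ↦ g ∘ T`. -/
def adjOp (T : X →L[ℝ] Y) : StrongDual ℝ Y →L[ℝ] StrongDual ℝ X :=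
  (ContinuousLinearMap.compL ℝ X Y ℝ).flip T

/-- Weak convergence of a sequence to a point. -/
def WeaklyConvTo (x : ℕ → X) (a : X) : Prop :=
  ∀ f : StrongDual ℝ X, Tendsto (fun n => f (x n)) atTop (𝓝 (f a))

/-- A sequence is weakly Cauchy if `(f (x n))` converges for every functional `f`. -/
def WeaklyCauchySeq (x : ℕ → X) : Prop :=
  ∀ f : StrongDual ℝ X, ∃ l : ℝ, Tendsto (fun n => f (x n)) atTop (𝓝 l)

/-- A set is relatively weakly compact iff every sequence in it has a subsequence
weakly convergent to a point of the space (sequential form, by Eberlein–Šmulian). -/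
def RelWeaklyCompact (A : Set X) : Prop :=
  ∀ x : ℕ → X, (∀ n, x n ∈ A) →
    ∃ (a : X) (φ : ℕ → ℕ), StrictMono φ ∧ WeaklyConvTo (fun k => x (φ k)) a

/-- A set is weakly precompact if every sequence in it has a weakly Cauchy subsequence. -/
def WeaklyPrecompact (A : Set X) : Prop :=
  ∀ x : ℕ → X, (∀ n, x n ∈ A) →
    ∃ φ : ℕ → ℕ, StrictMono φ ∧ WeaklyCauchySeq (fun k => x (φ k))

/-- A weakly compact operator: the image of the closed unit ball is relatively
weakly compact. -/
def WeaklyCompactOp (T : X →L[ℝ] Y) : Prop :=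
  RelWeaklyCompact (⇑T '' closedBall 0 1)

/-- A weakly precompact operator: the image of the closed unit ball is weakly
precompact. -/
def WeaklyPrecompactOp (T : X →L[ℝ] Y) : Prop :=
  WeaklyPrecompact (⇑T '' closedBall 0 1)

/-- `g n → 0` uniformly on `A`. -/
def UnifNullOn (g : ℕ → X → ℝ) (A : Set X) : Prop :=
  ∀ ε > (0 : ℝ), ∃ N, ∀ n ≥ N, ∀ a ∈ A, |g n a| ≤ ε

/-- A weakly-`p`-Dunford-Pettis subset of `X`: bounded, and every weakly `p`-summable
sequence in `X*` tends to `0` uniformly on it. -/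
def WeaklyPDP (p : ℝ≥0∞) (A : Set X) : Prop :=
  IsBounded A ∧
    ∀ f : ℕ → StrongDual ℝ X, WeaklyPSummable p f → UnifNullOn (fun n a => f n a) A

/-- A weakly-`p`-L-subset of `X*`: bounded, and every weakly `p`-summable sequence
in `X` tends to `0` uniformly on it. -/
def WeaklyPLSet (p : ℝ≥0∞) (A : Set (StrongDual ℝ X)) : Prop :=
  IsBounded A ∧
    ∀ x : ℕ → X, WeaklyPSummable p x → UnifNullOn (fun n g => g (x n)) A

/-- A weakly-`p`-Cauchy sequence. -/
def WeaklyPCauchy (p : ℝ≥0∞) (x : ℕ → X) : Prop :=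
  ∀ φ ψ : ℕ → ℕ, StrictMono φ → StrictMono ψ →
    WeaklyPSummable p fun k => x (φ k) - x (ψ k)

/-- A weakly-`p`-precompact set: every sequence in it has a weakly-`p`-Cauchy
subsequence. -/
def WeaklyPPrecompact (p : ℝ≥0∞) (A : Set X) : Prop :=
  ∀ x : ℕ → X, (∀ n, x n ∈ A) →
    ∃ φ : ℕ → ℕ, StrictMono φ ∧ WeaklyPCauchy p fun k => x (φ k)

/-- A weakly-`p`-precompact operator. -/
def WeaklyPPrecompactOp (p : ℝ≥0∞) (T : X →L[ℝ] Y) : Prop :=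
  WeaklyPPrecompact p (⇑T '' closedBall 0 1)

/-- A `w*`-null sequence of functionals. -/
def WStarNull (f : ℕ → StrongDual ℝ X) : Prop :=
  ∀ x : X, Tendsto (fun n => f n x) atTop (𝓝 0)

/-- A limited subset of `X`: every `w*`-null sequence in `X*` tends to `0`
uniformly on it. -/
def LimitedSet (A : Set X) : Prop :=
  ∀ f : ℕ → StrongDual ℝ X, WStarNull f → UnifNullOn (fun n a => f n a) A

/-- A weakly unconditionally convergent (wuc) series. -/
def WUC (x : ℕ → X) : Prop :=
  ∀ f : StrongDual ℝ X, Summable fun n => |f (x n)|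

/-- An unconditionally converging operator: maps wuc series to unconditionally
convergent series. -/
def UncondConverging (T : X →L[ℝ] Y) : Prop :=
  ∀ x : ℕ → X, WUC x → Summable fun n => T (x n)

/-- A `V*`-subset of `X`. -/
def VStarSet (A : Set X) : Prop :=
  IsBounded A ∧ ∀ f : ℕ → StrongDual ℝ X, WUC f → UnifNullOn (fun n a => f n a) A

/-- `w*`-to-`w` continuity of an operator `T : X* → Y`, in the equivalent algebraic
form: for every `g ∈ Y*` the functional `g ∘ T` on `X*` is given by evaluation at
a point of `X`. -/
def WStarToWCont (T : StrongDual ℝ X →L[ℝ] Y) : Prop :=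
  ∀ g : StrongDual ℝ Y, ∃ x : X, ∀ f : StrongDual ℝ X, g (T f) = f x

end Defs

section SpaceProps
variable (p : ℝ≥0∞) (X : Type*) [NormedAddCommGroup X] [NormedSpace ℝ X]

/-- The Gelfand-Phillips property: every limited subset is relatively compact. -/
def GPspace : Prop :=
  ∀ A : Set X, Bornology.IsBounded A → LimitedSet A → IsCompact (closure A)

/-- The `p`-Gelfand-Phillips property: every limited weakly `p`-summable sequence is
norm null. -/
def pGP : Prop :=
  ∀ x : ℕ → X, LimitedSet (Set.range x) → WeaklyPSummable p x → NormNull x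

/-- Property `RDP_p`: every weakly-`p`-L-subset of `X*` is relatively weakly compact. -/
def RDPp : Prop :=
  ∀ A : Set (StrongDual ℝ X), WeaklyPLSet p A → RelWeaklyCompact A

/-- The Schur property. -/
def SchurSpace : Prop :=
  ∀ (x : ℕ → X) (a : X), WeaklyConvTo x a → Tendsto x atTop (𝓝 a)

/-- Weak sequential completeness. -/
def WeaklySeqComplete : Prop :=
  ∀ x : ℕ → X, WeaklyCauchySeq x → ∃ a : X, WeaklyConvTo x a

/-- Pełczyński's property (V). -/
def PropertyV : Prop :=
  ∀ (Y : Type) [NormedAddCommGroup Y] [NormedSpace ℝ Y] [CompleteSpace Y],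
    ∀ T : X →L[ℝ] Y, UncondConverging T → WeaklyCompactOp T

/-- Property (V*). -/
def PropertyVStar : Prop :=
  ∀ A : Set X, VStarSet A → RelWeaklyCompact A

/-- Reflexivity of a normed space: the canonical embedding into the double dual is
surjective. -/
def ReflexiveSpace : Prop :=
  Function.Surjective (NormedSpace.inclusionInDoubleDual ℝ X)

end SpaceProps

section Embeds
/-- `Z` embeds isomorphically into `W`. -/
def EmbedsIn (Z W : Type*) [NormedAddCommGroup Z] [NormedSpace ℝ Z]
    [NormedAddCommGroup W] [NormedSpace ℝ W] : Prop :=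
  ∃ f : Z →L[ℝ] W, ∃ c > (0 : ℝ), ∀ z : Z, c * ‖z‖ ≤ ‖f z‖

end Embeds

namespace Stmt7


/-! ### Combinatorial part : a Nash–Williams style theorem -/

/-- `Q` is a (finite) initial segment of the set `P`. -/
def Seg (Q : Finset ℕ) (P : Set ℕ) : Prop :=
  ↑Q ⊆ P ∧ ∀ x ∈ P, ∀ y ∈ Q, x ≤ y → x ∈ Q

variable (Fam : Finset ℕ → Prop)

def Goodf (F : Finset ℕ) (P : Set ℕ) : Prop :=
  ∃ Q : Finset ℕ, Seg Q P ∧ Fam (F ∪ Q)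

def Acpt (N : Set ℕ) (F : Finset ℕ) : Prop :=
  ∀ P : Set ℕ, P ⊆ N → P.Infinite → Goodf Fam F P

def Rejc (N : Set ℕ) (F : Finset ℕ) : Prop :=
  ∀ P : Set ℕ, P ⊆ N → P.Infinite → ¬ Acpt Fam P F

variable {Fam}

lemma acpt_mono {N N' : Set ℕ} {F : Finset ℕ} (h : N' ⊆ N) (ha : Acpt Fam N F) :
    Acpt Fam N' F := fun P hP hPinf => ha P (hP.trans h) hPinf

lemma rejc_mono {N N' : Set ℕ} {F : Finset ℕ} (h : N' ⊆ N) (ha : Rejc Fam N F) :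
    Rejc Fam N' F := fun P hP hPinf => ha P (hP.trans h) hPinf

lemma acpt_of_fam {N : Set ℕ} {F : Finset ℕ} (h : Fam F) : Acpt Fam N F := by
  intro P hP hPinf
  exact ⟨∅, ⟨by simp, by simp⟩, by simpa using h⟩

lemma exists_dec (N : Set ℕ) (hN : N.Infinite) (F : Finset ℕ) :
    ∃ N', N' ⊆ N ∧ N'.Infinite ∧ (Acpt Fam N' F ∨ Rejc Fam N' F) := by
  by_cases h : Rejc Fam N F
  · exact ⟨N, subset_rfl, hN, Or.inr h⟩
  · simp only [Rejc, not_forall, not_not] at h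
    obtain ⟨P, hP, hPinf, hacc⟩ := h
    exact ⟨P, hP, hPinf, Or.inl hacc⟩

lemma infinite_exists_gt {R : Set ℕ} (h : R.Infinite) (b : ℕ) : ∃ n ∈ R, b < n := by
  obtain ⟨n, hn⟩ := (h.diff (Set.finite_Iic b)).nonempty
  exact ⟨n, hn.1, by simpa using hn.2⟩

lemma infinite_gtset {R : Set ℕ} (h : R.Infinite) (b : ℕ) : ({x ∈ R | b < x} : Set ℕ).Infinite := by
  have : ({x ∈ R | b < x} : Set ℕ) = R \ Set.Iic b := by
    ext x; simp [Set.mem_sep_iff, Set.mem_diff, not_le]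
  rw [this]
  exact h.diff (Set.finite_Iic b)

lemma decide_list (P : Finset (Finset ℕ)) (R : Set ℕ) (hR : R.Infinite) :
    ∃ R', R' ⊆ R ∧ R'.Infinite ∧ ∀ F ∈ P, Acpt Fam R' F ∨ Rejc Fam R' F := by
  classical
  induction P using Finset.induction_on with
  | empty => exact ⟨R, subset_rfl, hR, by simp⟩
  | @insert F P hFP ih =>
    obtain ⟨R₁, hR₁sub, hR₁inf, hdec⟩ := ih
    obtain ⟨R₂, hR₂sub, hR₂inf, hdec₂⟩ := exists_dec (Fam := Fam) R₁ hR₁inf F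
    refine ⟨R₂, hR₂sub.trans hR₁sub, hR₂inf, ?_⟩
    intro G hG
    rcases Finset.mem_insert.1 hG with rfl | hG
    · exact hdec₂
    · rcases hdec G hG with h | h
      · exact Or.inl (acpt_mono hR₂sub h)
      · exact Or.inr (rejc_mono hR₂sub h)

/-- Generic fusion lemma. -/
theorem fusion (Inv : Finset ℕ → Set ℕ → Prop) (R₀ : Set ℕ) (hR₀ : R₀.Infinite)
    (hbase : Inv ∅ R₀)
    (hstep : ∀ C R, Inv C R → R.Infinite → ∀ b : ℕ, ∃ n ∈ R, b < n ∧
      ∃ R', R' ⊆ R ∧ R'.Infinite ∧ (∀ x ∈ R', n < x) ∧ Inv (insert n C) R') :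
    ∃ u : ℕ → ℕ, StrictMono u ∧ (∀ j, u j ∈ R₀) ∧
      ∀ k : ℕ, ∃ R, R ⊆ R₀ ∧ R.Infinite ∧ Inv ((Finset.range k).image u) R ∧
        ∀ j, k ≤ j → u j ∈ R := by
  classical
  let State := {s : Finset ℕ × Set ℕ // Inv s.1 s.2 ∧ s.2.Infinite ∧
    (∀ x ∈ s.1, ∀ y ∈ s.2, x < y) ∧ s.2 ⊆ R₀}
  have key : ∀ s : State, ∃ t : ℕ × State,
      t.2.1.1 = insert t.1 s.1.1 ∧ t.2.1.2 ⊆ s.1.2 ∧ t.1 ∈ s.1.2 ∧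
      (∀ x ∈ s.1.1, x < t.1) ∧ (∀ y ∈ t.2.1.2, t.1 < y) := by
    rintro ⟨⟨C, R⟩, hInv, hRinf, hlt, hR0⟩
    obtain ⟨n, hnR, hbn, R', hR'R, hR'inf, hgt, hInv'⟩ := hstep C R hInv hRinf (C.sup id)
    refine ⟨(n, ⟨(insert n C, R'), hInv', hR'inf, ?_, hR'R.trans hR0⟩), rfl, hR'R, hnR, ?_, hgt⟩
    · intro x hx y hy
      rcases Finset.mem_insert.1 hx with rfl | hx
      · exact hgt y hy
      · exact lt_trans (lt_of_le_of_lt (Finset.le_sup (f := id) hx) hbn) (hgt y hy)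
    · intro x hx
      exact lt_of_le_of_lt (Finset.le_sup (f := id) hx) hbn
  let Fn : State → ℕ × State := fun s => (key s).choose
  let s0 : State := ⟨(∅, R₀), hbase, hR₀, by simp, subset_rfl⟩
  let st : ℕ → State := fun k => Nat.recAux s0 (fun _ s => (Fn s).2) k
  let u : ℕ → ℕ := fun k => (Fn (st k)).1
  have hst : ∀ k, st (k + 1) = (Fn (st k)).2 := fun k => rfl
  have spec : ∀ k, (st (k + 1)).1.1 = insert (u k) (st k).1.1 ∧
      (st (k + 1)).1.2 ⊆ (st k).1.2 ∧ u k ∈ (st k).1.2 ∧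
      (∀ x ∈ (st k).1.1, x < u k) ∧ (∀ y ∈ (st (k + 1)).1.2, u k < y) := by
    intro k
    have := (key (st k)).choose_spec
    rw [hst k]
    exact this
  have chain : ∀ k j, k ≤ j → (st j).1.2 ⊆ (st k).1.2 := by
    intro k j hkj
    induction j with
    | zero => cases Nat.le_zero.1 hkj; exact subset_rfl
    | succ j ih =>
      rcases eq_or_lt_of_le hkj with rfl | h
      · exact subset_rfl
      · exact (spec j).2.1.trans (ih (Nat.lt_succ_iff.mp h))
  have humem : ∀ j, u j ∈ (st j).1.2 := fun j => (spec j).2.2.1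
  have hmono : StrictMono u := by
    apply strictMono_nat_of_lt_succ
    intro k
    exact (spec k).2.2.2.2 (u (k + 1)) ((spec (k + 1)).2.2.1)
  have hC : ∀ k, (st k).1.1 = (Finset.range k).image u := by
    intro k
    induction k with
    | zero => simp [st, s0]
    | succ k ih =>
      rw [(spec k).1, ih, Finset.range_add_one, Finset.image_insert]
  refine ⟨u, hmono, fun j => (st j).2.2.2.2 (humem j), ?_⟩
  intro k
  refine ⟨(st k).1.2, (st k).2.2.2.2, (st k).2.2.1, by rw [← hC]; exact (st k).2.1, ?_⟩
  intro j hkj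
  exact chain k j hkj (humem j)


section Enum

variable {u : ℕ → ℕ}

/-- Tail of the range of `u` from index `k` on. -/
def uTail (u : ℕ → ℕ) (k : ℕ) : Set ℕ := {x | ∃ j, k ≤ j ∧ x = u j}

lemma uTail_infinite (u : ℕ → ℕ) (hu : StrictMono u) (k : ℕ) : (uTail u k).Infinite :=
  Set.infinite_of_injective_forall_mem
    (f := fun j : ℕ => u (k + j))
    (fun a b hab => by
      have := hu.injective hab
      omega)
    (fun a => ⟨k + a, Nat.le_add_right _ _, rfl⟩)

lemma uTail_subset_range (u : ℕ → ℕ) (k : ℕ) : uTail u k ⊆ Set.range u := by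
  rintro x ⟨j, _, rfl⟩; exact ⟨j, rfl⟩

open Classical in
/-- The first `k` such that `F ⊆ u '' [0,k)`, when it exists. -/
def kOf (u : ℕ → ℕ) (F : Finset ℕ) : ℕ :=
  if h : ∃ k, F ⊆ (Finset.range k).image u then Nat.find h else 0

lemma exists_cover {F : Finset ℕ} (hu : StrictMono u) (hF : ↑F ⊆ Set.range u) :
    ∃ k, F ⊆ (Finset.range k).image u := by
  classical
  induction F using Finset.induction_on with
  | empty => exact ⟨0, by simp⟩
  | @insert a F ha ih =>
    obtain ⟨k, hk⟩ := ih (by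
      intro x hx
      exact hF (by simpa using Or.inr hx))
    have haM : a ∈ Set.range u := hF (by simp)
    obtain ⟨j, hj⟩ := haM
    refine ⟨max k (j + 1), Finset.insert_subset ?_ (hk.trans ?_)⟩
    · exact Finset.mem_image.2 ⟨j, Finset.mem_range.2 (lt_of_lt_of_le (Nat.lt_succ_self j) (le_max_right _ _)), hj⟩
    · exact Finset.image_subset_image (Finset.range_subset_range.2 (le_max_left _ _))

lemma kOf_spec {F : Finset ℕ} (hu : StrictMono u) (hF : ↑F ⊆ Set.range u) :
    F ⊆ (Finset.range (kOf u F)).image u := by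
  classical
  rw [kOf, dif_pos (exists_cover hu hF)]
  exact Nat.find_spec (exists_cover hu hF)

lemma kOf_le {F : Finset ℕ} {j : ℕ} (hu : StrictMono u) (hF : ↑F ⊆ Set.range u) (hlt : ∀ a ∈ F, a < u j) :
    kOf u F ≤ j := by
  classical
  have hcov : F ⊆ (Finset.range j).image u := by
    intro a haF
    obtain ⟨ja, rfl⟩ := hF haF
    exact Finset.mem_image.2 ⟨ja, Finset.mem_range.2 (hu.lt_iff_lt.1 (hlt _ haF)), rfl⟩
  rw [kOf, dif_pos ⟨j, hcov⟩]
  exact Nat.find_le hcov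

lemma mem_uTail_kOf {F : Finset ℕ} {a : ℕ} (hu : StrictMono u) (haM : a ∈ Set.range u)
    (hF : ↑F ⊆ Set.range u) (hlt : ∀ y ∈ F, y < a) : a ∈ uTail u (kOf u F) := by
  obtain ⟨ja, rfl⟩ := haM
  exact ⟨ja, kOf_le hu hF hlt, rfl⟩

variable (Fam)

/-- The set of "bad" extension points of a rejected `F`. -/
def BadSet (u : ℕ → ℕ) (F : Finset ℕ) : Set ℕ :=
  {n | n ∈ Set.range u ∧ (∀ y ∈ F, y < n) ∧
    Acpt Fam (uTail u (kOf u (insert n F))) (insert n F)}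

variable {Fam}

lemma bad_finite {F : Finset ℕ} (hu : StrictMono u) (hF : ↑F ⊆ Set.range u)
    (hrej : Rejc Fam (uTail u (kOf u F)) F) : (BadSet Fam u F).Finite := by
  classical
  by_contra hinf
  have hPinf : (BadSet Fam u F).Infinite := hinf
  have hPsub : BadSet Fam u F ⊆ uTail u (kOf u F) := by
    rintro n ⟨hnM, hngt, _⟩
    exact mem_uTail_kOf hu hnM hF hngt
  refine hrej _ hPsub hPinf ?_
  intro Q hQP hQinf
  set n₀ := sInf Q with hn₀def
  have hn₀ : n₀ ∈ Q := Nat.sInf_mem hQinf.nonempty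
  have hn₀P := hQP hn₀
  obtain ⟨hn₀M, hn₀gt, hacc⟩ := hn₀P
  set Q' : Set ℕ := Q \ {n₀} with hQ'def
  have hQ'inf : Q'.Infinite := hQinf.diff (Set.finite_singleton n₀)
  have hQ'gt : ∀ z ∈ Q', n₀ < z := by
    rintro z ⟨hz, hzne⟩
    exact lt_of_le_of_ne (Nat.sInf_le hz) (Ne.symm hzne)
  have hQ'sub : Q' ⊆ uTail u (kOf u (insert n₀ F)) := by
    intro z hz
    obtain ⟨hzM, hzgt, _⟩ := hQP hz.1
    refine mem_uTail_kOf hu hzM ?_ ?_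
    · rw [Finset.coe_insert]
      exact Set.insert_subset hn₀M hF
    · intro y hy
      rcases Finset.mem_insert.1 hy with rfl | hy
      · exact hQ'gt z hz
      · exact lt_trans (hn₀gt y hy) (hQ'gt z hz)
  obtain ⟨Q₀, hQ₀seg, hFam⟩ := hacc Q' hQ'sub hQ'inf
  refine ⟨insert n₀ Q₀, ⟨?_, ?_⟩, ?_⟩
  · rw [Finset.coe_insert]
    exact Set.insert_subset hn₀ ((Set.Subset.trans hQ₀seg.1 Set.diff_subset))
  · intro x hx y hy hxy
    by_cases hxn : x = n₀
    · subst hxn; exact Finset.mem_insert_self _ _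
    · have hxQ' : x ∈ Q' := ⟨hx, hxn⟩
      rcases Finset.mem_insert.1 hy with rfl | hy
      · exact absurd (lt_of_lt_of_le (hQ'gt x hxQ') hxy) (lt_irrefl _)
      · exact Finset.mem_insert_of_mem (hQ₀seg.2 x hxQ' y hy hxy)
  · have huni : F ∪ insert n₀ Q₀ = insert n₀ F ∪ Q₀ := by
      ext a
      simp only [Finset.mem_union, Finset.mem_insert]
      tauto
    rw [huni]
    exact hFam

end Enum

/-- The Nash–Williams style dichotomy. -/
theorem nashWilliams (Fam : Finset ℕ → Prop) (N₀ : Set ℕ) (hN₀ : N₀.Infinite) :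
    ∃ M, M ⊆ N₀ ∧ M.Infinite ∧
      ((∀ P, P ⊆ M → P.Infinite → ∃ Q : Finset ℕ, Seg Q P ∧ Fam Q) ∨
       (∀ Q : Finset ℕ, ↑Q ⊆ M → ¬ Fam Q)) := by
  classical
  obtain ⟨N₁, hN₁sub, hN₁inf, hdec⟩ := exists_dec (Fam := Fam) N₀ hN₀ ∅
  rcases hdec with hacc | hrej
  · refine ⟨N₁, hN₁sub, hN₁inf, Or.inl ?_⟩
    intro P hP hPinf
    obtain ⟨Q, hseg, hfam⟩ := hacc P hP hPinf
    exact ⟨Q, hseg, by simpa using hfam⟩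
  · -- Fusion 1: a subset on which everything is decided
    set Inv1 : Finset ℕ → Set ℕ → Prop := fun C R =>
      ∀ F ∈ C.powerset, Acpt Fam R F ∨ Rejc Fam R F with hInv1def
    have hbase1 : Inv1 ∅ N₁ := by
      intro F hF
      rw [Finset.mem_powerset, Finset.subset_empty] at hF
      subst hF
      exact Or.inr hrej
    have hstep1 : ∀ C R, Inv1 C R → R.Infinite → ∀ b : ℕ, ∃ n ∈ R, b < n ∧
        ∃ R', R' ⊆ R ∧ R'.Infinite ∧ (∀ x ∈ R', n < x) ∧ Inv1 (insert n C) R' := by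
      intro C R hInv hRinf b
      obtain ⟨n, hnR, hbn⟩ := infinite_exists_gt hRinf b
      obtain ⟨R', hR'sub, hR'inf, hdecall⟩ :=
        decide_list (Fam := Fam) ((insert n C).powerset) {x ∈ R | n < x} (infinite_gtset hRinf n)
      refine ⟨n, hnR, hbn, R', hR'sub.trans (Set.sep_subset _ _), hR'inf,
        fun x hx => (hR'sub hx).2, hdecall⟩
    obtain ⟨u, hu, humem, hufus⟩ := fusion Inv1 N₁ hN₁inf hbase1 hstep1
    set M : Set ℕ := Set.range u with hMdef
    have hMN₁ : M ⊆ N₁ := by rintro x ⟨j, rfl⟩; exact humem j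
    have hdecided : ∀ F : Finset ℕ, ↑F ⊆ M →
        Acpt Fam (uTail u (kOf u F)) F ∨ Rejc Fam (uTail u (kOf u F)) F := by
      intro F hF
      obtain ⟨R, hRsub, hRinf, hInv, htail⟩ := hufus (kOf u F)
      have hsub : uTail u (kOf u F) ⊆ R := by
        rintro x ⟨j, hj, rfl⟩
        exact htail j hj
      rcases hInv F (Finset.mem_powerset.2 (kOf_spec hu hF)) with h | h
      · exact Or.inl (acpt_mono hsub h)
      · exact Or.inr (rejc_mono hsub h)
    have hrejM : Rejc Fam (uTail u (kOf u ∅)) ∅ :=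
      rejc_mono ((uTail_subset_range u _).trans hMN₁) hrej
    -- Fusion 2: a subset all of whose finite subsets are rejected
    set Inv2 : Finset ℕ → Set ℕ → Prop := fun C R =>
      R ⊆ M ∧ ↑C ⊆ M ∧ ∀ F ∈ C.powerset, Rejc Fam (uTail u (kOf u F)) F with hInv2def
    have hMinf : M.Infinite := Set.infinite_range_of_injective hu.injective
    have hbase2 : Inv2 ∅ M := by
      refine ⟨subset_rfl, by simp, ?_⟩
      intro F hF
      rw [Finset.mem_powerset, Finset.subset_empty] at hF
      subst hF
      exact hrejM
    have hstep2 : ∀ C R, Inv2 C R → R.Infinite → ∀ b : ℕ, ∃ n ∈ R, b < n ∧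
        ∃ R', R' ⊆ R ∧ R'.Infinite ∧ (∀ x ∈ R', n < x) ∧ Inv2 (insert n C) R' := by
      rintro C R ⟨hRM, hCM, hrejall⟩ hRinf b
      have hbig : (⋃ F ∈ C.powerset, BadSet Fam u F).Finite := by
        apply Set.Finite.biUnion (Finset.finite_toSet _)
        intro F hF
        have hFM : ↑F ⊆ Set.range u :=
          (Finset.coe_subset.2 (Finset.mem_powerset.1 hF)).trans hCM
        exact bad_finite hu hFM (hrejall F hF)
      obtain ⟨c, hc⟩ := hbig.bddAbove
      obtain ⟨n, hnR, hn⟩ := infinite_exists_gt hRinf (max b (max c (C.sup id)))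
      have hnb : b < n := lt_of_le_of_lt (le_max_left _ _) hn
      have hnc : c < n := lt_of_le_of_lt ((le_max_left _ _).trans (le_max_right _ _)) hn
      have hnC : ∀ y ∈ C, y < n := fun y hy =>
        lt_of_le_of_lt ((Finset.le_sup (f := id) hy).trans ((le_max_right _ _).trans (le_max_right _ _))) hn
      refine ⟨n, hnR, hnb, {x ∈ R | n < x}, Set.sep_subset _ _, infinite_gtset hRinf n,
        fun x hx => hx.2, ?_, ?_, ?_⟩
      · exact (Set.sep_subset _ _).trans hRM
      · rw [Finset.coe_insert]
        exact Set.insert_subset (hRM hnR) hCM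
      · intro F hF
        rw [Finset.mem_powerset] at hF
        by_cases hnF : n ∈ F
        · have hFe : ↑F ⊆ M := by
            intro a ha
            rcases Finset.mem_insert.1 (hF ha) with rfl | h
            · exact hRM hnR
            · exact hCM h
          rcases hdecided F hFe with hA | hR
          · exfalso
            have herase : F.erase n ⊆ C := by
              intro a ha
              rcases Finset.mem_insert.1 (hF (Finset.mem_of_mem_erase ha)) with rfl | h
              · exact absurd rfl (Finset.ne_of_mem_erase ha)
              · exact h
            have hnbad : n ∈ BadSet Fam u (F.erase n) := by
              refine ⟨hRM hnR, ?_, ?_⟩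
              · intro y hy
                exact hnC y (herase hy)
              · rw [Finset.insert_erase hnF]
                exact hA
            have : n ≤ c := hc (Set.mem_biUnion (Finset.mem_coe.2 (Finset.mem_powerset.2 herase)) hnbad)
            omega
          · exact hR
        · have : F ⊆ C := fun a ha => (Finset.mem_insert.1 (hF ha)).resolve_left
            (fun h => hnF (h ▸ ha))
          exact hrejall F (Finset.mem_powerset.2 this)
    obtain ⟨u', hu', hu'mem, hu'fus⟩ := fusion Inv2 M hMinf hbase2 hstep2
    refine ⟨Set.range u', ?_, Set.infinite_range_of_injective hu'.injective, Or.inr ?_⟩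
    · rintro x ⟨j, rfl⟩
      exact hN₁sub (hMN₁ (hu'mem j))
    · intro Q hQ hfamQ
      obtain ⟨k, hk⟩ := exists_cover hu' hQ
      obtain ⟨R, _, _, hInv, _⟩ := hu'fus k
      exact hInv.2.2 Q (Finset.mem_powerset.2 hk) _ subset_rfl (uTail_infinite u hu _)
        (acpt_of_fam hfamQ)


/-! ### Part 2 : extraction of independent families -/

section Extraction

variable {X : Type*} [NormedAddCommGroup X] [NormedSpace ℝ X]


/-- rank of `n` in the finite set `F`. -/
def rk (F : Finset ℕ) (n : ℕ) : ℕ := (F.filter (· ≤ n)).card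

/-- the family of finite sets over which the alternating `(r,s)`-pattern is *not* realized. -/
def AltFam (x : ℕ → X) (r s : ℝ) (F : Finset ℕ) : Prop :=
  ¬ ∃ t : StrongDual ℝ X, ‖t‖ ≤ 1 ∧ ∀ n ∈ F,
      (Odd (rk F n) → s ≤ t (x n)) ∧ (Even (rk F n) → t (x n) ≤ r)

lemma dcFinset (S : Finset ℕ) (hdc : ∀ a ∈ S, ∀ b ≤ a, b ∈ S) : S = Finset.range S.card := by
  classical
  have hmem : ∀ a, a ∈ S ↔ a < S.card := by
    intro a
    constructor
    · intro ha
      have hsub : Finset.range (a + 1) ⊆ S := by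
        intro b hb
        exact hdc a ha b (Nat.lt_succ_iff.1 (Finset.mem_range.1 hb))
      have := Finset.card_le_card hsub
      simpa using this
    · intro ha
      by_contra hnA
      have hsub : S ⊆ Finset.range a := by
        intro b hb
        rcases lt_or_ge b a with h | h
        · exact Finset.mem_range.2 h
        · exact absurd (hdc b hb a h) hnA
      have := Finset.card_le_card hsub
      simp only [Finset.card_range] at this
      omega
  ext a
  rw [hmem, Finset.mem_range]

lemma rk_image {u : ℕ → ℕ} {L : ℕ} (hu : ∀ a b, a < b → b < L → u a < u b) {l : ℕ}
    (hl : l < L) : rk ((Finset.range L).image u) (u l) = l + 1 := by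
  classical
  have hfil : (Finset.range L).filter (fun j => u j ≤ u l) = Finset.range (l + 1) := by
    ext j
    simp only [Finset.mem_filter, Finset.mem_range, Nat.lt_succ_iff]
    constructor
    · rintro ⟨hjL, hle⟩
      by_contra hgt
      push_neg at hgt
      exact absurd hle (not_le.2 (hu l j hgt hjL))
    · intro hjl
      refine ⟨lt_of_le_of_lt hjl hl, ?_⟩
      rcases eq_or_lt_of_le hjl with rfl | h
      · exact le_rfl
      · exact (hu j l h hl).le
  rw [rk, Finset.filter_image, hfil, Finset.card_image_of_injOn, Finset.card_range]
  intro a ha b hb hab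
  simp only [Finset.coe_range, Set.mem_Iio] at ha hb
  rcases lt_trichotomy a b with h | h | h
  · exact absurd hab (ne_of_lt (hu a b h (lt_of_le_of_lt (Nat.lt_succ_iff.1 hb) hl)))
  · exact h
  · exact absurd hab.symm (ne_of_lt (hu b a h (lt_of_le_of_lt (Nat.lt_succ_iff.1 ha) hl)))

lemma seg_range {v : ℕ → ℕ} (hv : StrictMono v) {Q : Finset ℕ}
    (hseg : Seg Q (Set.range v)) : ∃ k, Q = (Finset.range k).image v := by
  classical
  set I : Finset ℕ := (Finset.range (Q.sup id + 1)).filter (fun l => v l ∈ Q) with hIdef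
  have hQI : Q = I.image v := by
    ext q
    constructor
    · intro hq
      obtain ⟨l, rfl⟩ := hseg.1 hq
      refine Finset.mem_image.2 ⟨l, Finset.mem_filter.2 ⟨Finset.mem_range.2 ?_, hq⟩, rfl⟩
      exact Nat.lt_succ_of_le ((hv.le_apply).trans (Finset.le_sup (f := id) hq))
    · intro hq
      obtain ⟨l, hl, rfl⟩ := Finset.mem_image.1 hq
      exact (Finset.mem_filter.1 hl).2
  have hIdc : ∀ a ∈ I, ∀ b ≤ a, b ∈ I := by
    intro a ha b hba
    rw [hIdef, Finset.mem_filter, Finset.mem_range] at ha ⊢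
    refine ⟨lt_of_le_of_lt hba ha.1, ?_⟩
    exact hseg.2 (v b) ⟨b, rfl⟩ (v a) ha.2 (hv.monotone hba)
  refine ⟨I.card, ?_⟩
  exact hQI.trans (congrArg (fun S => Finset.image v S) (dcFinset I hIdc))

lemma indep_of_hornB (x : ℕ → X) (r s : ℝ) (M' : Set ℕ) (hM' : M'.Infinite)
    (hB : ∀ Q : Finset ℕ, ↑Q ⊆ M' → ¬ AltFam x r s Q) :
    ∃ φ : ℕ → ℕ, StrictMono φ ∧ ∀ (m : ℕ) (σ : Fin m → Bool),
      ∃ t : StrongDual ℝ X, ‖t‖ ≤ 1 ∧ ∀ i : Fin m,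
        (σ i = true → s ≤ t (x (φ i))) ∧ (σ i = false → t (x (φ i)) ≤ r) := by
  classical
  have hM'' : (setOf (· ∈ M')).Infinite := hM'
  set e : ℕ → ℕ := Nat.nth (· ∈ M') with hedef
  have he : StrictMono e := Nat.nth_strictMono hM''
  have hemem : ∀ j, e j ∈ M' := fun j => Nat.nth_mem_of_infinite hM'' j
  refine ⟨fun i => e (4 * i + 4), he.comp (fun a b hab => by omega), ?_⟩
  intro m σ
  rcases Nat.eq_zero_or_pos m with rfl | hm
  · exact ⟨0, by simp, fun i => i.elim0⟩
  set σ' : ℕ → Bool := fun i => if h : i < m then σ ⟨i, h⟩ else false with hσ'def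
  set posf : ℕ → ℕ := fun i => 2 * i + (if σ' i then 1 else 2) with hposdef
  have hposlb : ∀ i, 2 * i + 1 ≤ posf i := by
    intro i; simp only [hposdef]; split <;> omega
  have hposub : ∀ i, posf i ≤ 2 * i + 2 := by
    intro i; simp only [hposdef]; split <;> omega
  have hposmono : ∀ i j, i < j → posf i < posf j := by
    intro i j hij
    have h1 := hposub i; have h2 := hposlb j
    omega
  have hposmono' : ∀ i j, i ≤ j → posf i ≤ posf j := by
    intro i j hij
    rcases eq_or_lt_of_le hij with rfl | h
    · exact le_rfl
    · exact (hposmono _ _ h).le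
  set L : ℕ := posf (m - 1) with hLdef
  set idxf : ℕ → ℕ := fun l => ((Finset.range m).filter (fun j => posf j ≤ l)).card with hidxdef
  have hfil_eq : ∀ l, (Finset.range m).filter (fun j => posf j ≤ l) = Finset.range (idxf l) := by
    intro l
    exact dcFinset _ (by
      intro a ha b hba
      rw [Finset.mem_filter, Finset.mem_range] at ha ⊢
      exact ⟨lt_of_le_of_lt hba ha.1, le_trans (hposmono' b a hba) ha.2⟩)
  have hmem_fil : ∀ l j, (j < m ∧ posf j ≤ l) ↔ j < idxf l := by
    intro l j
    rw [← Finset.mem_range (n := idxf l), ← hfil_eq l, Finset.mem_filter, Finset.mem_range]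
  have hidx_lt : ∀ l, l < L → idxf l < m := by
    intro l hl
    by_contra hge
    push_neg at hge
    have := (hmem_fil l (m - 1)).2 (lt_of_lt_of_le (by omega) hge)
    rw [hLdef] at hl
    omega
  have hidx_lb : ∀ l, l < L → l + 1 ≤ posf (idxf l) := by
    intro l hl
    by_contra hcon
    push_neg at hcon
    have := (hmem_fil l (idxf l)).1 ⟨hidx_lt l hl, by omega⟩
    omega
  have hidx_ub : ∀ l, l < L → posf (idxf l) ≤ l + 3 := by
    intro l hl
    rcases Nat.eq_zero_or_pos (idxf l) with h0 | hpos
    · rw [h0]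
      have := hposub 0
      omega
    · have hmem := (hmem_fil l (idxf l - 1)).2 (by omega)
      have h1 := hposub (idxf l)
      have h2 := hposlb (idxf l - 1)
      have h3 := hmem.2
      omega
  have hidx_at : ∀ i, i < m → idxf (posf i - 1) = i := by
    intro i him
    have h1 : ¬ (i < idxf (posf i - 1)) := by
      intro hcon
      have := ((hmem_fil (posf i - 1) i).2 hcon).2
      have := hposlb i
      omega
    have h2 : ∀ j, j < i → j < idxf (posf i - 1) := by
      intro j hj
      refine (hmem_fil _ j).1 ⟨lt_trans hj him, ?_⟩
      have := hposmono j i hj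
      omega
    rcases Nat.lt_or_ge (idxf (posf i - 1)) i with h | h
    · exact absurd (h2 _ h) (lt_irrefl _)
    · omega
  set wf : ℕ → ℕ := fun l => 4 * (idxf l) + 4 - (posf (idxf l) - 1 - l) with hwfdef
  have hwf_at : ∀ i, i < m → wf (posf i - 1) = 4 * i + 4 := by
    intro i him
    simp only [hwfdef, hidx_at i him]
    omega
  have hidx_mono : ∀ l l', l ≤ l' → idxf l ≤ idxf l' := by
    intro l l' hll
    apply Finset.card_le_card
    intro j hj
    rw [Finset.mem_filter] at hj ⊢
    exact ⟨hj.1, hj.2.trans hll⟩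
  have hwf_mono : ∀ l l', l < l' → l' < L → wf l < wf l' := by
    intro l l' hll hl'L
    have hlL : l < L := lt_trans hll hl'L
    have hi := hidx_mono l l' hll.le
    have h1 := hidx_lb l hlL
    have h2 := hidx_ub l hlL
    have h3 := hidx_lb l' hl'L
    have h4 := hidx_ub l' hl'L
    rcases eq_or_lt_of_le hi with heq | hlt
    · simp only [hwfdef]
      rw [heq] at h1 h2 ⊢
      omega
    · simp only [hwfdef]
      omega
  have hWmono : ∀ a b, a < b → b < L → e (wf a) < e (wf b) := by
    intro a b hab hbL
    exact he (hwf_mono a b hab hbL)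
  set F : Finset ℕ := (Finset.range L).image (fun l => e (wf l)) with hFdef
  have hFsub : ↑F ⊆ M' := by
    intro q hq
    rw [hFdef] at hq
    simp only [Finset.coe_image, Set.mem_image] at hq
    obtain ⟨l, _, rfl⟩ := hq
    exact hemem _
  have hnalt := hB F hFsub
  rw [AltFam, not_not] at hnalt
  obtain ⟨t, ht1, ht2⟩ := hnalt
  refine ⟨t, ht1, ?_⟩
  intro i
  have him : (i : ℕ) < m := i.isLt
  have hσ'i : σ' (i : ℕ) = σ i := by
    simp only [hσ'def, dif_pos him]
  have hposL : posf (i : ℕ) ≤ L := hposmono' _ _ (by omega)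
  have hposge : 1 ≤ posf (i : ℕ) := le_trans (by omega) (hposlb (i : ℕ))
  have hlL : posf (i : ℕ) - 1 < L := by omega
  have hmemF : e (wf (posf (i : ℕ) - 1)) ∈ F := by
    rw [hFdef]
    exact Finset.mem_image.2 ⟨posf (i : ℕ) - 1, Finset.mem_range.2 hlL, rfl⟩
  have hrk : rk F (e (wf (posf (i : ℕ) - 1))) = posf (i : ℕ) := by
    have := rk_image (u := fun l => e (wf l)) (L := L) hWmono (l := posf (i : ℕ) - 1) hlL
    rw [hFdef]
    rw [this]
    omega
  have hval : e (wf (posf (i : ℕ) - 1)) = e (4 * (i : ℕ) + 4) := by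
    rw [hwf_at _ him]
  have hspec := ht2 _ hmemF
  rw [hrk, hval] at hspec
  constructor
  · intro hσ
    refine hspec.1 ?_
    have hval2 : posf (i : ℕ) = 2 * (i : ℕ) + 1 := by
      simp [hposdef, hσ'i, hσ]
    rw [hval2, Nat.odd_iff]
    omega
  · intro hσ
    refine hspec.2 ?_
    have hval2 : posf (i : ℕ) = 2 * (i : ℕ) + 2 := by
      simp [hposdef, hσ'i, hσ]
    rw [hval2, Nat.even_iff]
    omega

lemma mainExtraction (x : ℕ → X) (C : ℝ) (hC : ∀ n, ‖x n‖ ≤ C)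
    (hno : ¬ ∃ φ : ℕ → ℕ, StrictMono φ ∧ WeaklyCauchySeq fun k => x (φ k)) :
    ∃ r s : ℝ, r < s ∧ ∃ φ : ℕ → ℕ, StrictMono φ ∧ ∀ (m : ℕ) (σ : Fin m → Bool),
      ∃ t : StrongDual ℝ X, ‖t‖ ≤ 1 ∧ ∀ i : Fin m,
        (σ i = true → s ≤ t (x (φ i))) ∧ (σ i = false → t (x (φ i)) ≤ r) := by
  classical
  by_cases hind : ∃ r s : ℝ, r < s ∧ ∃ φ : ℕ → ℕ, StrictMono φ ∧ ∀ (m : ℕ) (σ : Fin m → Bool),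
      ∃ t : StrongDual ℝ X, ‖t‖ ≤ 1 ∧ ∀ i : Fin m,
        (σ i = true → s ≤ t (x (φ i))) ∧ (σ i = false → t (x (φ i)) ≤ r)
  · exact hind
  exfalso
  set E := Denumerable.eqv (ℚ × ℚ) with hEdef
  have key : ∀ (i : ℕ) (N : Set ℕ), N.Infinite → ∃ M, M ⊆ N ∧ M.Infinite ∧
      (((E.symm i).1 : ℝ) < ((E.symm i).2 : ℝ) →
        ∀ P, P ⊆ M → P.Infinite → ∃ Q : Finset ℕ, Seg Q P ∧
          AltFam x ((E.symm i).1 : ℝ) ((E.symm i).2 : ℝ) Q) := by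
    intro i N hN
    by_cases hrs : ((E.symm i).1 : ℝ) < ((E.symm i).2 : ℝ)
    · obtain ⟨M, hMN, hMinf, hhorn⟩ :=
        nashWilliams (AltFam x ((E.symm i).1 : ℝ) ((E.symm i).2 : ℝ)) N hN
      rcases hhorn with hA | hB
      · exact ⟨M, hMN, hMinf, fun _ => hA⟩
      · exfalso
        obtain ⟨φ, hφ, hφind⟩ := indep_of_hornB x _ _ M hMinf hB
        exact hind ⟨_, _, hrs, φ, hφ, hφind⟩
    · exact ⟨N, subset_rfl, hN, fun h => absurd h hrs⟩
  have key2 : ∀ s : {S : Set ℕ // S.Infinite} × ℕ, ∃ s' : {S : Set ℕ // S.Infinite},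
      s'.1 ⊆ s.1.1 ∧ (((E.symm s.2).1 : ℝ) < ((E.symm s.2).2 : ℝ) →
        ∀ P, P ⊆ s'.1 → P.Infinite → ∃ Q : Finset ℕ, Seg Q P ∧
          AltFam x ((E.symm s.2).1 : ℝ) ((E.symm s.2).2 : ℝ) Q) := by
    rintro ⟨⟨S, hS⟩, i⟩
    obtain ⟨M, h1, h2, h3⟩ := key i S hS
    exact ⟨⟨M, h2⟩, h1, h3⟩
  let step : {S : Set ℕ // S.Infinite} × ℕ → {S : Set ℕ // S.Infinite} := fun s => (key2 s).choose
  let st : ℕ → {S : Set ℕ // S.Infinite} :=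
    fun i => Nat.recAux ⟨Set.univ, Set.infinite_univ⟩ (fun i S => step (S, i)) i
  have hstd : ∀ i, st (i + 1) = step (st i, i) := fun i => rfl
  have hstspec : ∀ i, (st (i + 1)).1 ⊆ (st i).1 ∧
      (((E.symm i).1 : ℝ) < ((E.symm i).2 : ℝ) →
        ∀ P, P ⊆ (st (i + 1)).1 → P.Infinite → ∃ Q : Finset ℕ, Seg Q P ∧
          AltFam x ((E.symm i).1 : ℝ) ((E.symm i).2 : ℝ) Q) := by
    intro i
    have := (key2 ((st i), i)).choose_spec
    rw [hstd i]
    exact this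
  have hchain : ∀ i j, i ≤ j → (st j).1 ⊆ (st i).1 := by
    intro i j hij
    induction j with
    | zero => cases Nat.le_zero.1 hij; exact subset_rfl
    | succ j ih =>
      rcases eq_or_lt_of_le hij with rfl | h
      · exact subset_rfl
      · exact ((hstspec j).1).trans (ih (Nat.lt_succ_iff.1 h))
  have dkey : ∀ (i b : ℕ), ∃ n, b < n ∧ n ∈ (st (i + 1)).1 := by
    intro i b
    obtain ⟨n, hn1, hn2⟩ := infinite_exists_gt (st (i + 1)).2 b
    exact ⟨n, hn2, hn1⟩
  let d : ℕ → ℕ := fun i => Nat.recAux (dkey 0 0).choose (fun i di => (dkey (i + 1) di).choose) i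
  have hd0 : d 0 ∈ (st 1).1 := (dkey 0 0).choose_spec.2
  have hdsucc : ∀ i, d i < d (i + 1) ∧ d (i + 1) ∈ (st (i + 2)).1 := fun i =>
    ⟨(dkey (i + 1) (d i)).choose_spec.1, (dkey (i + 1) (d i)).choose_spec.2⟩
  have hdmem : ∀ i, d i ∈ (st (i + 1)).1 := by
    intro i
    cases i with
    | zero => exact hd0
    | succ i => exact (hdsucc i).2
  have hdmono : StrictMono d := strictMono_nat_of_lt_succ fun i => (hdsucc i).1
  refine hno ⟨d, hdmono, ?_⟩
  intro f
  by_cases hf : f = 0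
  · subst hf
    exact ⟨0, by simpa using tendsto_const_nhds⟩
  have hfpos : 0 < ‖f‖ := norm_pos_iff.2 hf
  set g : StrongDual ℝ X := ‖f‖⁻¹ • f with hgdef
  have hg1 : ‖g‖ ≤ 1 := by
    rw [hgdef, norm_smul, norm_inv, norm_norm, inv_mul_cancel₀ hfpos.ne']
  set a : ℕ → ℝ := fun j => g (x (d j)) with hadef
  have haC : ∀ j, |a j| ≤ C := by
    intro j
    calc |a j| = ‖g (x (d j))‖ := by rw [Real.norm_eq_abs]
    _ ≤ ‖g‖ * ‖x (d j)‖ := g.le_opNorm _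
    _ ≤ 1 * C := mul_le_mul hg1 (hC _) (norm_nonneg _) zero_le_one
    _ = C := one_mul C
  have hbdd1 : IsBoundedUnder (· ≤ ·) atTop a :=
    isBoundedUnder_of ⟨C, fun j => (abs_le.1 (haC j)).2⟩
  have hbdd2 : IsBoundedUnder (· ≥ ·) atTop a :=
    isBoundedUnder_of ⟨-C, fun j => (abs_le.1 (haC j)).1⟩
  rcases le_or_gt (limsup a atTop) (liminf a atTop) with hle | hlt
  · have heq : liminf a atTop = limsup a atTop :=
      le_antisymm (liminf_le_limsup hbdd1 hbdd2) hle
    have hconv : Tendsto a atTop (𝓝 (limsup a atTop)) :=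
      tendsto_of_liminf_eq_limsup heq rfl hbdd1 hbdd2
    refine ⟨‖f‖ * limsup a atTop, ?_⟩
    have hrewrite : ∀ j, f (x (d j)) = ‖f‖ * a j := by
      intro j
      rw [hadef]
      simp only [hgdef, ContinuousLinearMap.smul_apply, smul_eq_mul]
      rw [← mul_assoc, mul_inv_cancel₀ hfpos.ne', one_mul]
    simp only [hrewrite]
    exact hconv.const_mul _
  · exfalso
    obtain ⟨rr, hrr1, hrr2⟩ := exists_rat_btwn hlt
    obtain ⟨ss, hss1, hss2⟩ := exists_rat_btwn hrr2
    have hrs : (rr : ℝ) < (ss : ℝ) := by exact_mod_cast hss1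
    set i : ℕ := E (rr, ss) with hidef
    have hEi : E.symm i = (rr, ss) := by rw [hidef, Equiv.symm_apply_apply]
    have hhorn := (hstspec i).2
    rw [hEi] at hhorn
    have hhorn2 := hhorn hrs
    have hfr_s : ∀ b : ℕ, ∃ j, b < j ∧ (ss : ℝ) < a j := by
      intro b
      have hcob : IsCoboundedUnder (· ≤ ·) atTop a := hbdd2.isCoboundedUnder_le
      have hfreq := frequently_lt_of_lt_limsup hcob hss2
      rw [frequently_atTop'] at hfreq
      obtain ⟨j, hj1, hj2⟩ := hfreq b
      exact ⟨j, hj1, hj2⟩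
    have hfr_r : ∀ b : ℕ, ∃ j, b < j ∧ a j < (rr : ℝ) := by
      intro b
      have hcob : IsCoboundedUnder (· ≥ ·) atTop a := hbdd1.isCoboundedUnder_ge
      have hfreq := frequently_lt_of_liminf_lt hcob hrr1
      rw [frequently_atTop'] at hfreq
      obtain ⟨j, hj1, hj2⟩ := hfreq b
      exact ⟨j, hj1, hj2⟩
    have hkeyJ : ∀ (l b : ℕ), ∃ j, b < j ∧ (Even l → (ss : ℝ) < a j) ∧
        (¬ Even l → a j < (rr : ℝ)) := by
      intro l b
      by_cases hev : Even l
      · obtain ⟨j, h1, h2⟩ := hfr_s b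
        exact ⟨j, h1, fun _ => h2, fun h => absurd hev h⟩
      · obtain ⟨j, h1, h2⟩ := hfr_r b
        exact ⟨j, h1, fun h => absurd h hev, fun _ => h2⟩
    let J : ℕ → ℕ := fun l => Nat.recAux (hkeyJ 0 i).choose (fun l Jl => (hkeyJ (l + 1) Jl).choose) l
    have hJ0 : i < J 0 ∧ (Even 0 → (ss : ℝ) < a (J 0)) ∧ (¬ Even 0 → a (J 0) < (rr : ℝ)) :=
      (hkeyJ 0 i).choose_spec
    have hJsucc : ∀ l, J l < J (l + 1) ∧ (Even (l + 1) → (ss : ℝ) < a (J (l + 1))) ∧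
        (¬ Even (l + 1) → a (J (l + 1)) < (rr : ℝ)) := fun l => (hkeyJ (l + 1) (J l)).choose_spec
    have hJmono : StrictMono J := strictMono_nat_of_lt_succ fun l => (hJsucc l).1
    have hJi : ∀ l, i < J l := by
      intro l
      induction l with
      | zero => exact hJ0.1
      | succ l ih => exact lt_trans ih (hJsucc l).1
    have hJpar : ∀ l, (Even l → (ss : ℝ) < a (J l)) ∧ (¬ Even l → a (J l) < (rr : ℝ)) := by
      intro l
      cases l with
      | zero => exact hJ0.2
      | succ l => exact (hJsucc l).2
    set v : ℕ → ℕ := fun l => d (J l) with hvdef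
    have hvmono : StrictMono v := hdmono.comp hJmono
    have hNsub : Set.range v ⊆ (st (i + 1)).1 := by
      rintro _ ⟨l, rfl⟩
      exact hchain (i + 1) (J l + 1) (by have := hJi l; omega) (hdmem (J l))
    obtain ⟨Q, hseg, hfamQ⟩ := hhorn2 (Set.range v) hNsub
      (Set.infinite_range_of_injective hvmono.injective)
    apply hfamQ
    obtain ⟨k, rfl⟩ := seg_range hvmono hseg
    refine ⟨g, hg1, ?_⟩
    intro n hn
    obtain ⟨l, hl, rfl⟩ := Finset.mem_image.1 hn
    rw [Finset.mem_range] at hl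
    have hrk := rk_image (u := v) (L := k) (fun a b hab _ => hvmono hab) hl
    rw [hrk]
    constructor
    · intro hodd
      have hev : Even l := by
        rw [Nat.odd_iff] at hodd
        rw [Nat.even_iff]
        omega
      exact ((hJpar l).1 hev).le
    · intro heven
      have hnev : ¬ Even l := by
        rw [Nat.even_iff] at heven
        rw [Nat.even_iff]
        omega
      exact ((hJpar l).2 hnev).le

end Extraction






/-! ### Part 3 : analytic construction -/

section Analytic

variable {X Y : Type*} [NormedAddCommGroup X] [NormedSpace ℝ X]
  [NormedAddCommGroup Y] [NormedSpace ℝ Y]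


lemma ulim_exists (U : Ultrafilter ℕ) (v : ℕ → ℝ) (c : ℝ) (hv : ∀ m, |v m| ≤ c) :
    ∃ l, Tendsto v (↑U) (𝓝 l) ∧ |l| ≤ c := by
  have hmem : Set.Icc (-c) c ∈ Filter.map v ↑U := by
    apply Filter.mem_map.2
    apply Filter.univ_mem'
    intro m
    exact Set.mem_Icc.2 (abs_le.1 (hv m))
  obtain ⟨l, hlmem, hle⟩ := (isCompact_Icc (a := -c) (b := c)).ultrafilter_le_nhds
    (U.map v) (Filter.le_principal_iff.2 hmem)
  exact ⟨l, hle, abs_le.2 (Set.mem_Icc.1 hlmem)⟩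

lemma absCS {ι : Type*} (F : Finset ι) (f g : ι → ℝ) :
    |∑ i ∈ F, f i * g i| ≤ Real.sqrt (∑ i ∈ F, f i ^ 2) * Real.sqrt (∑ i ∈ F, g i ^ 2) := by
  have h := Finset.sum_mul_sq_le_sq_mul_sq F f g
  have h1 : |∑ i ∈ F, f i * g i| = Real.sqrt ((∑ i ∈ F, f i * g i) ^ 2) :=
    (Real.sqrt_sq_eq_abs _).symm
  rw [h1, ← Real.sqrt_mul (by positivity)]
  exact Real.sqrt_le_sqrt h

lemma half_card {a b m : ℕ} (hm : 0 < m) (h1 : a + b = 2 ^ m) (h2 : a = b) :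
    a = 2 ^ (m - 1) ∧ b = 2 ^ (m - 1) := by
  have hmeq : m = (m - 1) + 1 := by omega
  have hsplit : 2 ^ m = 2 ^ (m - 1) + 2 ^ (m - 1) := by
    conv_lhs => rw [hmeq]
    rw [pow_succ]
    ring
  omega

lemma rpow_split (m : ℕ) (hm : 0 < m) : (2 : ℝ) ^ m = 2 * 2 ^ (m - 1) := by
  have hmeq : m = (m - 1) + 1 := by omega
  conv_lhs => rw [hmeq]
  rw [pow_succ]
  ring

lemma analytic_contradiction {p : ℝ≥0∞} (hp2 : 2 ≤ p) (T : Y →L[ℝ] X) (y : ℕ → Y)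
    (hy : ∀ n, ‖y n‖ ≤ 1) (r s : ℝ) (hrs : r < s)
    (hIND : ∀ (m : ℕ) (σ : Fin m → Bool), ∃ t : StrongDual ℝ X, ‖t‖ ≤ 1 ∧ ∀ i : Fin m,
      (σ i = true → s ≤ t (T (y i))) ∧ (σ i = false → t (T (y i)) ≤ r))
    (hPC : PConvergent p (adjOp T)) : False := by
  classical
  choose t ht1 ht2 using hIND
  set U : Ultrafilter ℕ := hyperfilter ℕ with hUdef
  have hUcof : ∀ n : ℕ, {m | n < m} ∈ (U : Filter ℕ) := by
    intro n
    apply hyperfilter_le_cofinite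
    rw [Filter.mem_cofinite]
    have hcompl : {m : ℕ | n < m}ᶜ = {m | m ≤ n} := by ext m; simp [not_lt]
    rw [hcompl]
    exact Set.finite_Iic n
  set eps : ∀ m : ℕ, (Fin m → Bool) → ℕ → ℝ :=
    fun m σ n => if h : n < m then (if σ ⟨n, h⟩ then (1 : ℝ) else -1) else 0 with hepsdef
  have heps1 : ∀ m σ n, |eps m σ n| ≤ 1 := by
    intro m σ n
    simp only [hepsdef]
    split_ifs <;> simp
  have hepssq : ∀ (m : ℕ) (σ : Fin m → Bool) (n : ℕ), n < m → eps m σ n * eps m σ n = 1 := by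
    intro m σ n hn
    simp only [hepsdef, dif_pos hn]
    split_ifs <;> norm_num
  set G : ℕ → ℕ → StrongDual ℝ X :=
    fun m n => (2 ^ m : ℝ)⁻¹ • ∑ σ : Fin m → Bool, eps m σ n • t m σ with hGdef
  have hGapp : ∀ m n (x : X), G m n x
      = (2 ^ m : ℝ)⁻¹ * ∑ σ : Fin m → Bool, eps m σ n * (t m σ x) := by
    intro m n x
    simp only [hGdef, ContinuousLinearMap.smul_apply, ContinuousLinearMap.coe_sum',
      Finset.sum_apply, ContinuousLinearMap.coe_smul', Pi.smul_apply, smul_eq_mul]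
  have htx : ∀ (m : ℕ) (σ : Fin m → Bool) (x : X), |t m σ x| ≤ ‖x‖ := by
    intro m σ x
    calc |t m σ x| = ‖t m σ x‖ := (Real.norm_eq_abs _).symm
    _ ≤ ‖t m σ‖ * ‖x‖ := (t m σ).le_opNorm x
    _ ≤ 1 * ‖x‖ := mul_le_mul_of_nonneg_right (ht1 m σ) (norm_nonneg x)
    _ = ‖x‖ := one_mul _
  have hcard : ∀ m : ℕ, (Finset.univ : Finset (Fin m → Bool)).card = 2 ^ m := by
    intro m
    rw [Finset.card_univ, Fintype.card_fun]
    simp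
  have h2pos : ∀ m : ℕ, (0 : ℝ) < (2 ^ m : ℝ) := fun m => by positivity
  have hGb : ∀ m n (x : X), |G m n x| ≤ ‖x‖ := by
    intro m n x
    rw [hGapp, abs_mul, abs_inv, abs_of_pos (h2pos m), inv_mul_le_iff₀ (h2pos m)]
    calc |∑ σ : Fin m → Bool, eps m σ n * (t m σ x)|
        ≤ ∑ σ : Fin m → Bool, |eps m σ n * (t m σ x)| := Finset.abs_sum_le_sum_abs _ _
    _ ≤ ∑ _σ : Fin m → Bool, ‖x‖ := by
        apply Finset.sum_le_sum
        intro σ _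
        rw [abs_mul]
        calc |eps m σ n| * |t m σ x| ≤ 1 * ‖x‖ :=
          mul_le_mul (heps1 m σ n) (htx m σ x) (abs_nonneg _) zero_le_one
        _ = ‖x‖ := one_mul _
    _ = (2 ^ m : ℝ) * ‖x‖ := by
        rw [Finset.sum_const, hcard m, nsmul_eq_mul]
        push_cast
        ring
  have hglim : ∀ n : ℕ, ∃ gn : StrongDual ℝ X, ∀ x : X, Tendsto (fun m => G m n x) ↑U (𝓝 (gn x)) := by
    intro n
    have hex : ∀ x : X, ∃ l, Tendsto (fun m => G m n x) ↑U (𝓝 l) ∧ |l| ≤ ‖x‖ := fun x =>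
      ulim_exists U _ _ (fun m => hGb m n x)
    choose l hl hlb using hex
    have hadd : ∀ x z : X, l (x + z) = l x + l z := by
      intro x z
      have h1 : Tendsto (fun m => G m n (x + z)) ↑U (𝓝 (l x + l z)) := by
        have h2 := (hl x).add (hl z)
        have h3 : (fun m => G m n x + G m n z) = fun m => G m n (x + z) := by
          funext m
          rw [map_add]
        rwa [h3] at h2
      exact tendsto_nhds_unique (hl (x + z)) h1
    have hsmul : ∀ (c : ℝ) (x : X), l (c • x) = c * l x := by
      intro c x
      have h1 : Tendsto (fun m => G m n (c • x)) ↑U (𝓝 (c * l x)) := by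
        have h2 := (hl x).const_mul c
        have h3 : (fun m => c * G m n x) = fun m => G m n (c • x) := by
          funext m
          rw [map_smul, smul_eq_mul]
        rwa [h3] at h2
      exact tendsto_nhds_unique (hl (c • x)) h1
    refine ⟨LinearMap.mkContinuous
      { toFun := l
        map_add' := hadd
        map_smul' := by intro c x; simpa using hsmul c x } 1 (fun x => ?_), fun x => hl x⟩
    rw [Real.norm_eq_abs, one_mul]
    exact hlb x
  choose g hg using hglim
  -- diagonal lower bound at finite stage
  have hstage : ∀ (m n : ℕ), n < m → (s - r) / 2 ≤ G m n (T (y n)) := by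
    intro m n hm
    rw [hGapp]
    set i : Fin m := ⟨n, hm⟩ with hidef
    set w : (Fin m → Bool) → ℝ := fun σ => t m σ (T (y n)) with hwdef
    have hterm : ∀ σ : Fin m → Bool, eps m σ n * w σ = if σ i then w σ else - w σ := by
      intro σ
      simp only [hepsdef, hidef, dif_pos hm]
      split_ifs <;> ring
    have hsplit : ∑ σ : Fin m → Bool, eps m σ n * w σ
        = (∑ σ ∈ Finset.univ.filter (fun σ : Fin m → Bool => σ i = true), w σ)
          + (∑ σ ∈ Finset.univ.filter (fun σ : Fin m → Bool => ¬ (σ i = true)), - w σ) := by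
      rw [← Finset.sum_filter_add_sum_filter_not Finset.univ (fun σ : Fin m → Bool => σ i = true)
        (fun σ => eps m σ n * w σ)]
      congr 1
      · apply Finset.sum_congr rfl
        intro σ hσ
        rw [hterm σ, if_pos (of_eq_true (eq_true (Finset.mem_filter.1 hσ).2))]
      · apply Finset.sum_congr rfl
        intro σ hσ
        rw [hterm σ, if_neg]
        have := (Finset.mem_filter.1 hσ).2
        simpa using this
    have hbij : (Finset.univ.filter (fun σ : Fin m → Bool => σ i = true)).card
        = (Finset.univ.filter (fun σ : Fin m → Bool => ¬ (σ i = true))).card := by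
      apply Finset.card_bij' (fun σ _ => Function.update σ i false)
        (fun σ _ => Function.update σ i true)
      case hi => intro σ hσ; simp
      case hj => intro σ hσ; simp
      case left_inv =>
        intro σ hσ
        have hσi : σ i = true := (Finset.mem_filter.1 hσ).2
        funext b
        rcases eq_or_ne b i with rfl | hb
        · simp [hσi]
        · rw [Function.update_of_ne hb, Function.update_of_ne hb]
      case right_inv =>
        intro σ hσ
        have hσi : σ i = false := by
          have hh := (Finset.mem_filter.1 hσ).2
          simpa using hh
        funext b
        rcases eq_or_ne b i with rfl | hb
        · simp [hσi]
        · rw [Function.update_of_ne hb, Function.update_of_ne hb]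
    have hsumcard := Finset.card_filter_add_card_filter_not
      (s := (Finset.univ : Finset (Fin m → Bool))) (fun σ : Fin m → Bool => σ i = true)
    rw [hcard m] at hsumcard
    obtain ⟨hcard1, hcard2⟩ := half_card (lt_of_le_of_lt (Nat.zero_le n) hm) hsumcard hbij
    have hsum1 : (2 ^ (m - 1) : ℝ) * s
        ≤ ∑ σ ∈ Finset.univ.filter (fun σ : Fin m → Bool => σ i = true), w σ := by
      have hptw : ∀ σ ∈ Finset.univ.filter (fun σ : Fin m → Bool => σ i = true), s ≤ w σ := by
        intro σ hσ
        exact (ht2 m σ i).1 (Finset.mem_filter.1 hσ).2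
      have hb := Finset.card_nsmul_le_sum
        (Finset.univ.filter (fun σ : Fin m → Bool => σ i = true)) w s hptw
      rw [hcard1, nsmul_eq_mul] at hb
      have hcast : ((2 ^ (m - 1) : ℕ) : ℝ) = (2 : ℝ) ^ (m - 1) := by push_cast; ring
      rwa [hcast] at hb
    have hsum2 : (2 ^ (m - 1) : ℝ) * (-r)
        ≤ ∑ σ ∈ Finset.univ.filter (fun σ : Fin m → Bool => ¬ (σ i = true)), - w σ := by
      have hptw : ∀ σ ∈ Finset.univ.filter (fun σ : Fin m → Bool => ¬ (σ i = true)),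
          -r ≤ - w σ := by
        intro σ hσ
        have hσi : σ i = false := by
          have hh := (Finset.mem_filter.1 hσ).2
          simpa using hh
        exact neg_le_neg ((ht2 m σ i).2 hσi)
      have hb := Finset.card_nsmul_le_sum
        (Finset.univ.filter (fun σ : Fin m → Bool => ¬ (σ i = true))) (fun σ => - w σ) (-r) hptw
      rw [hcard2, nsmul_eq_mul] at hb
      have hcast : ((2 ^ (m - 1) : ℕ) : ℝ) = (2 : ℝ) ^ (m - 1) := by push_cast; ring
      rwa [hcast] at hb
    have htotal : (2 ^ (m - 1) : ℝ) * (s - r) ≤ ∑ σ : Fin m → Bool, eps m σ n * w σ := by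
      rw [hsplit]
      calc (2 ^ (m - 1) : ℝ) * (s - r)
          = 2 ^ (m - 1) * s + 2 ^ (m - 1) * (-r) := by ring
      _ ≤ _ := add_le_add hsum1 hsum2
    have h2m : (2 : ℝ) ^ m = 2 * 2 ^ (m - 1) :=
      rpow_split m (lt_of_le_of_lt (Nat.zero_le n) hm)
    rw [le_inv_mul_iff₀ (h2pos m)]
    calc (2 : ℝ) ^ m * ((s - r) / 2) = 2 ^ (m - 1) * (s - r) := by rw [h2m]; ring
    _ ≤ _ := htotal
  have hdiag : ∀ n, (s - r) / 2 ≤ g n (T (y n)) := by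
    intro n
    refine ge_of_tendsto (hg n (T (y n))) ?_
    filter_upwards [hUcof n] with m hm
    exact hstage m n hm
  -- Cauchy–Schwarz bound at finite stage
  have hstage2 : ∀ (F : Finset ℕ) (aa : ℕ → ℝ) (x : X) (m : ℕ), (∀ n ∈ F, n < m) →
      |∑ n ∈ F, aa n * G m n x| ≤ Real.sqrt (∑ n ∈ F, (aa n) ^ 2) * ‖x‖ := by
    intro F aa x m hFm
    set w : (Fin m → Bool) → ℝ := fun σ => t m σ x with hwdef
    set c : (Fin m → Bool) → ℝ := fun σ => ∑ n ∈ F, aa n * eps m σ n with hcdef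
    have hswap : ∑ n ∈ F, aa n * G m n x = (2 ^ m : ℝ)⁻¹ * ∑ σ : Fin m → Bool, c σ * w σ := by
      have h1 : ∀ n ∈ F, aa n * G m n x
          = ∑ σ : Fin m → Bool, (2 ^ m : ℝ)⁻¹ * (aa n * eps m σ n * w σ) := by
        intro n _
        rw [hGapp, Finset.mul_sum, Finset.mul_sum]
        apply Finset.sum_congr rfl
        intro σ _
        rw [hwdef]
        ring
      rw [Finset.sum_congr rfl h1, Finset.sum_comm, Finset.mul_sum]
      apply Finset.sum_congr rfl
      intro σ _
      rw [hcdef, Finset.sum_mul, Finset.mul_sum]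
    have horth : ∀ n ∈ F, ∀ n' ∈ F, n ≠ n' →
        ∑ σ : Fin m → Bool, eps m σ n * eps m σ n' = 0 := by
      intro n hn n' hn' hne
      have hnm := hFm n hn
      apply Finset.sum_ninvolution (fun σ => Function.update σ ⟨n, hnm⟩ (! σ ⟨n, hnm⟩))
      · intro σ
        have he1 : eps m (Function.update σ ⟨n, hnm⟩ (! σ ⟨n, hnm⟩)) n = - eps m σ n := by
          simp only [hepsdef, dif_pos hnm, Function.update_self]
          cases hσ : σ ⟨n, hnm⟩ <;> simp [hσ]
        have hb' : ∀ (h' : n' < m), (⟨n', h'⟩ : Fin m) ≠ ⟨n, hnm⟩ := fun h' hc =>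
          hne ((congrArg Fin.val hc).symm)
        have he2 : eps m (Function.update σ ⟨n, hnm⟩ (! σ ⟨n, hnm⟩)) n' = eps m σ n' := by
          by_cases h' : n' < m
          · simp only [hepsdef, dif_pos h', Function.update_of_ne (hb' h')]
          · simp only [hepsdef, dif_neg h']
        rw [he1, he2]
        ring
      · intro σ hσ heq
        have hcf := congrFun heq ⟨n, hnm⟩
        rw [Function.update_self] at hcf
        exact (Bool.not_ne_self _) hcf
      · intro σ
        exact Finset.mem_univ _
      · intro σ
        funext b
        rcases eq_or_ne b ⟨n, hnm⟩ with rfl | hb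
        · simp [Function.update_self]
        · rw [Function.update_of_ne hb, Function.update_of_ne hb]
    have hdiagσ : ∀ n ∈ F, ∑ σ : Fin m → Bool, eps m σ n * eps m σ n = (2 ^ m : ℝ) := by
      intro n hn
      have heach : ∀ σ : Fin m → Bool, eps m σ n * eps m σ n = 1 := fun σ =>
        hepssq m σ n (hFm n hn)
      rw [Finset.sum_congr rfl (fun σ _ => heach σ), Finset.sum_const, hcard m, nsmul_eq_mul,
        mul_one]
      push_cast
      ring
    have hexpand : ∀ σ : Fin m → Bool,
        c σ ^ 2 = ∑ n ∈ F, ∑ n' ∈ F, (aa n * eps m σ n) * (aa n' * eps m σ n') := by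
      intro σ
      rw [hcdef, sq, Finset.sum_mul_sum]
    have hc2 : ∑ σ : Fin m → Bool, c σ ^ 2 = (2 ^ m : ℝ) * ∑ n ∈ F, aa n ^ 2 := by
      calc ∑ σ : Fin m → Bool, c σ ^ 2
          = ∑ σ : Fin m → Bool, ∑ n ∈ F, ∑ n' ∈ F, (aa n * eps m σ n) * (aa n' * eps m σ n') :=
            Finset.sum_congr rfl (fun σ _ => hexpand σ)
      _ = ∑ n ∈ F, ∑ σ : Fin m → Bool, ∑ n' ∈ F, (aa n * eps m σ n) * (aa n' * eps m σ n') :=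
            Finset.sum_comm
      _ = ∑ n ∈ F, ∑ n' ∈ F, ∑ σ : Fin m → Bool, (aa n * eps m σ n) * (aa n' * eps m σ n') :=
            Finset.sum_congr rfl (fun n _ => Finset.sum_comm)
      _ = ∑ n ∈ F, ∑ n' ∈ F, (aa n * aa n') * ∑ σ : Fin m → Bool, eps m σ n * eps m σ n' := by
            apply Finset.sum_congr rfl
            intro n _
            apply Finset.sum_congr rfl
            intro n' _
            rw [Finset.mul_sum]
            apply Finset.sum_congr rfl
            intro σ _
            ring
      _ = ∑ n ∈ F, (aa n * aa n) * ∑ σ : Fin m → Bool, eps m σ n * eps m σ n := by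
            apply Finset.sum_congr rfl
            intro n hn
            apply Finset.sum_eq_single_of_mem n hn
            intro n' hn' hne
            rw [horth n hn n' hn' (Ne.symm hne), mul_zero]
      _ = ∑ n ∈ F, aa n ^ 2 * (2 ^ m : ℝ) := by
            apply Finset.sum_congr rfl
            intro n hn
            rw [hdiagσ n hn]
            ring
      _ = (2 ^ m : ℝ) * ∑ n ∈ F, aa n ^ 2 := by
            rw [← Finset.sum_mul]
            ring
    have hw2 : ∑ σ : Fin m → Bool, w σ ^ 2 ≤ (2 ^ m : ℝ) * ‖x‖ ^ 2 := by
      calc ∑ σ : Fin m → Bool, w σ ^ 2 ≤ ∑ _σ : Fin m → Bool, ‖x‖ ^ 2 := by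
            apply Finset.sum_le_sum
            intro σ _
            calc w σ ^ 2 = |w σ| ^ 2 := (sq_abs _).symm
            _ ≤ ‖x‖ ^ 2 := pow_le_pow_left₀ (abs_nonneg _) (htx m σ x) 2
      _ = (2 ^ m : ℝ) * ‖x‖ ^ 2 := by
            rw [Finset.sum_const, hcard m, nsmul_eq_mul]
            push_cast
            ring
    rw [hswap, abs_mul, abs_inv, abs_of_pos (h2pos m), inv_mul_le_iff₀ (h2pos m)]
    have h2s : Real.sqrt ((2 : ℝ) ^ m) * Real.sqrt ((2 : ℝ) ^ m) = (2 : ℝ) ^ m :=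
      Real.mul_self_sqrt (le_of_lt (h2pos m))
    calc |∑ σ : Fin m → Bool, c σ * w σ|
        ≤ Real.sqrt (∑ σ : Fin m → Bool, c σ ^ 2) * Real.sqrt (∑ σ : Fin m → Bool, w σ ^ 2) :=
          absCS _ _ _
    _ ≤ Real.sqrt ((2 ^ m : ℝ) * ∑ n ∈ F, aa n ^ 2) * Real.sqrt ((2 ^ m : ℝ) * ‖x‖ ^ 2) := by
          rw [hc2]
          exact mul_le_mul_of_nonneg_left (Real.sqrt_le_sqrt hw2) (Real.sqrt_nonneg _)
    _ = (Real.sqrt ((2 : ℝ) ^ m) * Real.sqrt (∑ n ∈ F, aa n ^ 2))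
          * (Real.sqrt ((2 : ℝ) ^ m) * ‖x‖) := by
          rw [Real.sqrt_mul (le_of_lt (h2pos m)), Real.sqrt_mul (le_of_lt (h2pos m)),
            Real.sqrt_sq (norm_nonneg x)]
    _ = (Real.sqrt ((2 : ℝ) ^ m) * Real.sqrt ((2 : ℝ) ^ m))
          * (Real.sqrt (∑ n ∈ F, aa n ^ 2) * ‖x‖) := by ring
    _ = (2 : ℝ) ^ m * (Real.sqrt (∑ n ∈ F, aa n ^ 2) * ‖x‖) := by rw [h2s]
  have hnorm : ∀ (F : Finset ℕ) (aa : ℕ → ℝ),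
      ‖∑ n ∈ F, aa n • g n‖ ≤ Real.sqrt (∑ n ∈ F, aa n ^ 2) := by
    intro F aa
    apply ContinuousLinearMap.opNorm_le_bound _ (Real.sqrt_nonneg _)
    intro x
    have hlim : Tendsto (fun m => ∑ n ∈ F, aa n * G m n x) ↑U
        (𝓝 (∑ n ∈ F, aa n * g n x)) :=
      tendsto_finset_sum _ (fun n _ => ((hg n x).const_mul _))
    have hev : ∀ᶠ m in (U : Filter ℕ),
        |∑ n ∈ F, aa n * G m n x| ≤ Real.sqrt (∑ n ∈ F, aa n ^ 2) * ‖x‖ := by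
      filter_upwards [hUcof (F.sup id)] with m hm
      apply hstage2 F aa x m
      intro n hn
      exact lt_of_le_of_lt (Finset.le_sup (f := id) hn) hm
    have hfin := le_of_tendsto hlim.abs hev
    calc ‖(∑ n ∈ F, aa n • g n) x‖ = |∑ n ∈ F, aa n * g n x| := by
          rw [Real.norm_eq_abs]
          congr 1
          simp [ContinuousLinearMap.coe_sum', Finset.sum_apply,
            ContinuousLinearMap.coe_smul', Pi.smul_apply, smul_eq_mul]
    _ ≤ _ := hfin
  have hWeaklyPSummable : WeaklyPSummable p (fun n => g n) := by
    intro Φ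
    have hpart : ∀ F : Finset ℕ, ∑ n ∈ F, (Φ (g n)) ^ 2 ≤ ‖Φ‖ ^ 2 := by
      intro F
      set aa : ℕ → ℝ := fun n => Φ (g n) with haadef
      set S : ℝ := ∑ n ∈ F, aa n ^ 2 with hSdef
      have hS0 : 0 ≤ S := Finset.sum_nonneg (fun n _ => sq_nonneg _)
      have h1 : Φ (∑ n ∈ F, aa n • g n) = S := by
        rw [map_sum, hSdef]
        apply Finset.sum_congr rfl
        intro n _
        rw [map_smul, smul_eq_mul, haadef, sq]
      have h2 : S ≤ ‖Φ‖ * Real.sqrt S := by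
        calc S = |Φ (∑ n ∈ F, aa n • g n)| := by rw [h1, abs_of_nonneg hS0]
        _ = ‖Φ (∑ n ∈ F, aa n • g n)‖ := (Real.norm_eq_abs _).symm
        _ ≤ ‖Φ‖ * ‖∑ n ∈ F, aa n • g n‖ := Φ.le_opNorm _
        _ ≤ ‖Φ‖ * Real.sqrt S := mul_le_mul_of_nonneg_left (hnorm F aa) (norm_nonneg Φ)
      rcases eq_or_lt_of_le hS0 with hS | hS
      · rw [← hS]
        positivity
      · have hsq : Real.sqrt S * Real.sqrt S ≤ ‖Φ‖ * Real.sqrt S := by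
          rw [Real.mul_self_sqrt hS0]
          exact h2
        have h3 : Real.sqrt S ≤ ‖Φ‖ :=
          (mul_le_mul_iff_of_pos_right (Real.sqrt_pos.2 hS)).1 hsq
        calc S = Real.sqrt S * Real.sqrt S := (Real.mul_self_sqrt hS0).symm
        _ ≤ ‖Φ‖ * ‖Φ‖ := mul_le_mul h3 h3 (Real.sqrt_nonneg _) (norm_nonneg _)
        _ = ‖Φ‖ ^ 2 := (sq ‖Φ‖).symm
    have hsumm : Summable (fun n => (Φ (g n)) ^ 2) := by
      apply summable_of_sum_range_le (fun n => sq_nonneg _)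
      intro k
      exact hpart (Finset.range k)
    have hm2 : Memℓp (fun n => Φ (g n)) 2 := by
      apply memℓp_gen
      apply Summable.congr hsumm
      intro n
      rw [Real.norm_eq_abs]
      rw [show ((2 : ℝ≥0∞).toReal) = ((2 : ℕ) : ℝ) by simp]
      rw [Real.rpow_natCast, sq_abs]
    exact hm2.of_exponent_ge hp2
  have hNN := hPC (fun n => g n) hWeaklyPSummable
  have hlb : ∀ n, (s - r) / 2 ≤ ‖adjOp T (g n)‖ := by
    intro n
    have happ : (adjOp T (g n)) (y n) = g n (T (y n)) := rfl
    calc (s - r) / 2 ≤ g n (T (y n)) := hdiag n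
    _ = (adjOp T (g n)) (y n) := happ.symm
    _ ≤ |(adjOp T (g n)) (y n)| := le_abs_self _
    _ = ‖(adjOp T (g n)) (y n)‖ := (Real.norm_eq_abs _).symm
    _ ≤ ‖adjOp T (g n)‖ * ‖y n‖ := (adjOp T (g n)).le_opNorm _
    _ ≤ ‖adjOp T (g n)‖ * 1 := mul_le_mul_of_nonneg_left (hy n) (norm_nonneg _)
    _ = ‖adjOp T (g n)‖ := mul_one _
  have hfin : (s - r) / 2 ≤ 0 := ge_of_tendsto hNN (Filter.Eventually.of_forall hlb)
  linarith

end Analytic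


end Stmt7

/-- For `2 < p < ∞`, if `T : Y → X` is an operator between Banach spaces
whose adjoint `T* : X* → Y*` is `p`-convergent, then `T` is weakly precompact. -/
theorem stmt_7 {X Y : Type*} [NormedAddCommGroup X] [NormedSpace ℝ X] [CompleteSpace X]
    [NormedAddCommGroup Y] [NormedSpace ℝ Y] [CompleteSpace Y]
    (p : ℝ≥0∞) (hp : 2 < p) (hp' : p ≠ ⊤) (T : Y →L[ℝ] X)
    (h : PConvergent p (adjOp T)) :
    WeaklyPrecompactOp T := by
  intro x hx
  by_contra hnc
  choose yy hy1 hy2 using hx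
  have hyb : ∀ n, ‖yy n‖ ≤ 1 := by
    intro n
    have hn := hy1 n
    rwa [Metric.mem_closedBall, dist_zero_right] at hn
  have hbound : ∀ n, ‖x n‖ ≤ ‖T‖ := by
    intro n
    rw [← hy2 n]
    calc ‖T (yy n)‖ ≤ ‖T‖ * ‖yy n‖ := T.le_opNorm _
    _ ≤ ‖T‖ * 1 := mul_le_mul_of_nonneg_left (hyb n) (norm_nonneg _)
    _ = ‖T‖ := mul_one _
  obtain ⟨r, s, hrs, φ, hφ, hIND⟩ := Stmt7.mainExtraction x ‖T‖ hbound hnc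
  refine Stmt7.analytic_contradiction hp.le T (fun n => yy (φ n)) (fun n => hyb _) r s hrs ?_ h
  intro m σ
  obtain ⟨t, ht1, ht2⟩ := hIND m σ
  refine ⟨t, ht1, ?_⟩
  intro i
  have hres := ht2 i
  show (σ i = true → s ≤ t (T (yy (φ (i : ℕ))))) ∧ (σ i = false → t (T (yy (φ (i : ℕ)))) ≤ r)
  rw [hy2 (φ (i : ℕ))]
  exact hres
end
end

section
/- Let 1 < p < ∞. The following are equivalent for a Banach space X: (i) the closed unit ball B_{X*} is a weakly-p-L-set; (ii) every operator from ℓ_{p*} to X is compact; (iii) the identity of X is p-convergent (X ∈ C_p). -/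
open Filter Topology Metric NormedSpace Bornology ENNReal

noncomputable section

set_option maxHeartbeats 4000000
set_option linter.unusedSectionVars false
open scoped NNReal
section MyAux



section Aux1

lemma aux_sign_mul_self (x : ℝ) : Real.sign x * x = |x| := by
  rcases lt_trichotomy x 0 with h | h | h
  · rw [Real.sign_of_neg h, abs_of_neg h]; ring
  · simp [h]
  · rw [Real.sign_of_pos h, abs_of_pos h]; ring

lemma aux_abs_sign_le (x : ℝ) : |Real.sign x| ≤ 1 := by
  rcases lt_trichotomy x 0 with h | h | h
  · rw [Real.sign_of_neg h]; simp
  · simp [h]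
  · rw [Real.sign_of_pos h]; simp

lemma aux_conj {p q : ℝ≥0∞} (hp : 1 < p) (hp' : p ≠ ⊤) (hpq : p⁻¹ + q⁻¹ = 1) :
    p.toReal.HolderConjugate q.toReal ∧ q ≠ 0 ∧ q ≠ ⊤ := by
  have hp0 : p ≠ 0 := (zero_lt_one.trans hp).ne'
  have hq0 : q ≠ 0 := by
    rintro rfl
    simp at hpq
  have hq' : q ≠ ⊤ := by
    rintro rfl
    rw [ENNReal.inv_top, add_zero, ENNReal.inv_eq_one] at hpq
    exact hp.ne' hpq
  have htr : p.toReal⁻¹ + q.toReal⁻¹ = 1 := by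
    have h1 : (p⁻¹ + q⁻¹).toReal = (1 : ℝ≥0∞).toReal := by rw [hpq]
    rwa [ENNReal.toReal_add (by simp [hp0]) (by simp [hq0]), ENNReal.toReal_inv,
      ENNReal.toReal_inv, ENNReal.toReal_one] at h1
  have h1p : 1 < p.toReal := by
    have := (ENNReal.toReal_lt_toReal one_ne_top hp').2 hp
    simpa using this
  exact ⟨Real.holderConjugate_iff.mpr ⟨h1p, htr⟩, hq0, hq'⟩

lemma aux_holder {pr qr : ℝ} (h : pr.HolderConjugate qr) (s : Finset ℕ) (a d : ℕ → ℝ) :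
    |∑ n ∈ s, a n * d n| ≤
      (∑ n ∈ s, |d n| ^ pr) ^ (1 / pr) * (∑ n ∈ s, |a n| ^ qr) ^ (1 / qr) := by
  calc |∑ n ∈ s, a n * d n| ≤ ∑ n ∈ s, |a n * d n| := Finset.abs_sum_le_sum_abs _ _
    _ = ∑ n ∈ s, |d n| * |a n| := by
        refine Finset.sum_congr rfl fun n _ => ?_
        rw [abs_mul, mul_comm]
    _ ≤ (∑ n ∈ s, |(|d n|)| ^ pr) ^ (1 / pr) * (∑ n ∈ s, |(|a n|)| ^ qr) ^ (1 / qr) :=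
        Real.inner_le_Lp_mul_Lq s (fun n => |d n|) (fun n => |a n|) h
    _ = _ := by simp [abs_abs]

lemma aux_norming {pr qr : ℝ} (h : pr.HolderConjugate qr) (s : Finset ℕ) (d : ℕ → ℝ) :
    ∃ a : ℕ → ℝ, (∑ n ∈ s, |a n| ^ qr) ≤ 1 ∧
      ∑ n ∈ s, a n * d n = (∑ n ∈ s, |d n| ^ pr) ^ (1 / pr) := by
  obtain ⟨⟨g, hg, hgeq⟩, -⟩ := NNReal.isGreatest_Lp s (fun n => Real.toNNReal |d n|) h
  refine ⟨fun n => Real.sign (d n) * (g n : ℝ), ?_, ?_⟩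
  · calc ∑ n ∈ s, |Real.sign (d n) * (g n : ℝ)| ^ qr
        ≤ ∑ n ∈ s, (g n : ℝ) ^ qr := by
          refine Finset.sum_le_sum fun n _ => ?_
          refine Real.rpow_le_rpow (abs_nonneg _) ?_ h.symm.nonneg
          rw [abs_mul]
          calc |Real.sign (d n)| * |(g n : ℝ)| ≤ 1 * |(g n : ℝ)| :=
                mul_le_mul_of_nonneg_right (aux_abs_sign_le _) (abs_nonneg _)
            _ = (g n : ℝ) := by rw [one_mul, abs_of_nonneg (g n).coe_nonneg]
      _ ≤ 1 := by
          have := hg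
          simp only [Set.mem_setOf_eq] at this
          have h2 : ((∑ n ∈ s, g n ^ qr : ℝ≥0) : ℝ) ≤ 1 := by exact_mod_cast this
          rw [NNReal.coe_sum] at h2
          simpa [NNReal.coe_rpow] using h2
  · have h2 : ((∑ n ∈ s, Real.toNNReal |d n| * g n : ℝ≥0) : ℝ) =
        (((∑ n ∈ s, (Real.toNNReal |d n| : ℝ≥0) ^ pr) ^ (1 / pr) : ℝ≥0) : ℝ) := by
      exact_mod_cast congrArg NNReal.toReal hgeq
    rw [NNReal.coe_sum, NNReal.coe_rpow, NNReal.coe_sum] at h2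
    simp only [NNReal.coe_mul, NNReal.coe_rpow, Real.coe_toNNReal _ (abs_nonneg _)] at h2
    calc ∑ n ∈ s, Real.sign (d n) * (g n : ℝ) * d n
        = ∑ n ∈ s, |d n| * (g n : ℝ) := by
          refine Finset.sum_congr rfl fun n _ => ?_
          rw [mul_comm (Real.sign (d n)) ((g n : ℝ)), mul_assoc, aux_sign_mul_self, mul_comm]
      _ = _ := h2

end Aux1





section Aux2

variable {p q : ℝ≥0∞} [Fact (1 ≤ q)]

lemma aux_q_toReal_pos (hq0 : q ≠ 0) (hq' : q ≠ ⊤) : 0 < q.toReal :=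
  ENNReal.toReal_pos hq0 hq'

/-- truncation has smaller norm -/
lemma aux_trunc_norm_le (hq0 : q ≠ 0) (hq' : q ≠ ⊤) (a : lp (fun _ : ℕ => ℝ) q)
    (s : Finset ℕ) : ‖∑ n ∈ s, lp.single q n (a n)‖ ≤ ‖a‖ := by
  have hq : 0 < q.toReal := aux_q_toReal_pos hq0 hq'
  rw [← Real.rpow_le_rpow_iff (norm_nonneg _) (norm_nonneg _) hq,
    lp.norm_sum_single hq]
  exact lp.sum_rpow_le_norm_rpow hq a s

lemma aux_single_eq_smul (n : ℕ) (c : ℝ) :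
    lp.single (E := fun _ : ℕ => ℝ) q n c = c • lp.single q n (1 : ℝ) := by
  rw [← lp.single_smul]
  norm_num

/-- key duality estimate: the sequence `n ↦ T (eₙ)` has `ℓ^p`-type finite sums. -/
lemma aux_dual_sum (hr : p.toReal.HolderConjugate q.toReal) (hq0 : q ≠ 0) (hq' : q ≠ ⊤)
    (T : lp (fun _ : ℕ => ℝ) q →L[ℝ] ℝ) (s : Finset ℕ) :
    ∑ n ∈ s, |T (lp.single q n 1)| ^ p.toReal ≤ ‖T‖ ^ p.toReal := by
  have hq : 0 < q.toReal := aux_q_toReal_pos hq0 hq'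
  set d : ℕ → ℝ := fun n => T (lp.single q n 1) with hd
  obtain ⟨a, ha1, ha2⟩ := aux_norming hr s d
  set A : lp (fun _ : ℕ => ℝ) q := ∑ n ∈ s, lp.single q n (a n) with hA
  have hTA : T A = ∑ n ∈ s, a n * d n := by
    rw [hA, map_sum]
    refine Finset.sum_congr rfl fun n _ => ?_
    rw [aux_single_eq_smul, map_smul, smul_eq_mul]
  have hAnorm : ‖A‖ ≤ 1 := by
    rw [← Real.rpow_le_rpow_iff (norm_nonneg _) zero_le_one hq, Real.one_rpow, hA,
      lp.norm_sum_single hq]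
    simpa [Real.norm_eq_abs] using ha1
  have hsum_nonneg : (0:ℝ) ≤ ∑ n ∈ s, |d n| ^ p.toReal :=
    Finset.sum_nonneg fun n _ => Real.rpow_nonneg (abs_nonneg _) _
  have hle : (∑ n ∈ s, |d n| ^ p.toReal) ^ (1 / p.toReal) ≤ ‖T‖ := by
    rw [← ha2, ← hTA]
    calc T A ≤ |T A| := le_abs_self _
      _ = ‖T A‖ := (Real.norm_eq_abs _).symm
      _ ≤ ‖T‖ * ‖A‖ := T.le_opNorm A
      _ ≤ ‖T‖ * 1 := by
          exact mul_le_mul_of_nonneg_left hAnorm (norm_nonneg _)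
      _ = ‖T‖ := mul_one _
  calc ∑ n ∈ s, |d n| ^ p.toReal
      = ((∑ n ∈ s, |d n| ^ p.toReal) ^ (1 / p.toReal)) ^ p.toReal := by
        rw [one_div, Real.rpow_inv_rpow hsum_nonneg hr.ne_zero]
    _ ≤ ‖T‖ ^ p.toReal :=
        Real.rpow_le_rpow (Real.rpow_nonneg hsum_nonneg _) hle hr.nonneg

lemma aux_dual_memlp (hr : p.toReal.HolderConjugate q.toReal) (hq0 : q ≠ 0) (hq' : q ≠ ⊤)
    (T : lp (fun _ : ℕ => ℝ) q →L[ℝ] ℝ) :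
    Memℓp (fun n => T (lp.single q n 1)) p := by
  refine memℓp_gen' (C := ‖T‖ ^ p.toReal) fun s => ?_
  simpa [Real.norm_eq_abs] using aux_dual_sum hr hq0 hq' T s

end Aux2





section Aux3

variable {p q : ℝ≥0∞} [Fact (1 ≤ q)]
variable {X : Type*} [NormedAddCommGroup X] [NormedSpace ℝ X] [CompleteSpace X]

/-- From a weakly `p`-summable sequence, build the associated operator `ℓ^q → X`. -/
lemma aux_opOfWps (hr : p.toReal.HolderConjugate q.toReal) (hp0 : p ≠ 0) (hp' : p ≠ ⊤)
    (hq0 : q ≠ 0) (hq' : q ≠ ⊤)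
    (x : ℕ → X) (hx : ∀ f : StrongDual ℝ X, Memℓp (fun n => f (x n)) p) :
    ∃ S : lp (fun _ : ℕ => ℝ) q →L[ℝ] X, ∀ n, S (lp.single q n 1) = x n := by
  have hqr : 0 < q.toReal := ENNReal.toReal_pos hq0 hq'
  have hpr : 0 < p.toReal := ENNReal.toReal_pos hp0 hp'
  -- Step 1: uniform bound via Banach–Steinhaus
  obtain ⟨C, hC0, hCb⟩ : ∃ C, 0 ≤ C ∧ ∀ (s : Finset ℕ) (a : ℕ → ℝ),
      (∑ n ∈ s, |a n| ^ q.toReal) ≤ 1 → ‖∑ n ∈ s, a n • x n‖ ≤ C := by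
    have hg : ∀ f : StrongDual ℝ X, ∃ Cf, ∀ i : {v : X // ∃ (s : Finset ℕ) (a : ℕ → ℝ),
        (∑ n ∈ s, |a n| ^ q.toReal) ≤ 1 ∧ v = ∑ n ∈ s, a n • x n},
        ‖inclusionInDoubleDual ℝ X i.1 f‖ ≤ Cf := by
      intro f
      have hmem : Memℓp (fun n => f (x n)) p := hx f
      have hsumm : Summable fun n => |f (x n)| ^ p.toReal := by
        simpa [Real.norm_eq_abs] using hmem.summable hpr
      refine ⟨(∑' n, |f (x n)| ^ p.toReal) ^ (1 / p.toReal), ?_⟩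
      rintro ⟨v, s, a, ha, rfl⟩
      have h1 : f (∑ n ∈ s, a n • x n) = ∑ n ∈ s, a n * f (x n) := by
        rw [map_sum]; exact Finset.sum_congr rfl fun n _ => by rw [map_smul, smul_eq_mul]
      rw [NormedSpace.dual_def, h1, Real.norm_eq_abs]
      calc |∑ n ∈ s, a n * f (x n)|
          ≤ (∑ n ∈ s, |f (x n)| ^ p.toReal) ^ (1 / p.toReal) *
            (∑ n ∈ s, |a n| ^ q.toReal) ^ (1 / q.toReal) := aux_holder hr s a _
        _ ≤ (∑' n, |f (x n)| ^ p.toReal) ^ (1 / p.toReal) * 1 := by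
            refine mul_le_mul ?_ ?_ (Real.rpow_nonneg
              (Finset.sum_nonneg fun n _ => Real.rpow_nonneg (abs_nonneg _) _) _) ?_
            · refine Real.rpow_le_rpow
                (Finset.sum_nonneg fun n _ => Real.rpow_nonneg (abs_nonneg _) _)
                (hsumm.sum_le_tsum s (fun n _ => Real.rpow_nonneg (abs_nonneg _) _))
                (by positivity)
            · exact Real.rpow_le_one
                (Finset.sum_nonneg fun n _ => Real.rpow_nonneg (abs_nonneg _) _) ha
                (by positivity)
            · exact Real.rpow_nonneg (tsum_nonneg fun n => Real.rpow_nonneg (abs_nonneg _) _) _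
        _ = (∑' n, |f (x n)| ^ p.toReal) ^ (1 / p.toReal) := mul_one _
    obtain ⟨C', hC'⟩ := banach_steinhaus
      (g := fun i : {v : X // ∃ (s : Finset ℕ) (a : ℕ → ℝ),
        (∑ n ∈ s, |a n| ^ q.toReal) ≤ 1 ∧ v = ∑ n ∈ s, a n • x n} =>
        inclusionInDoubleDual ℝ X i.1) hg
    refine ⟨max C' 0, le_max_right _ _, fun s a ha => ?_⟩
    have := hC' ⟨∑ n ∈ s, a n • x n, s, a, ha, rfl⟩
    have hnorm : ‖inclusionInDoubleDual ℝ X (∑ n ∈ s, a n • x n)‖ = ‖∑ n ∈ s, a n • x n‖ :=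
      (inclusionInDoubleDualLi ℝ (E := X)).norm_map _
    rw [hnorm] at this
    exact this.trans (le_max_left _ _)
  -- Step 2: scaled bound
  have key2 : ∀ (s : Finset ℕ) (a : ℕ → ℝ),
      ‖∑ n ∈ s, a n • x n‖ ≤ C * (∑ n ∈ s, |a n| ^ q.toReal) ^ (1 / q.toReal) := by
    intro s a
    by_cases hz : ∀ n ∈ s, a n = 0
    · have : ∑ n ∈ s, a n • x n = 0 := Finset.sum_eq_zero fun n hn => by rw [hz n hn, zero_smul]
      rw [this, norm_zero]
      positivity
    · push_neg at hz
      obtain ⟨m, hm, hm0⟩ := hz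
      set sq := ∑ n ∈ s, |a n| ^ q.toReal with hsq
      have hsqpos : 0 < sq := by
        refine Finset.sum_pos' (fun n _ => Real.rpow_nonneg (abs_nonneg _) _) ⟨m, hm, ?_⟩
        exact Real.rpow_pos_of_pos (abs_pos.2 hm0) _
      set σ := sq ^ (1 / q.toReal) with hσ
      have hσpos : 0 < σ := Real.rpow_pos_of_pos hsqpos _
      have hσq : σ ^ q.toReal = sq := by
        rw [hσ, one_div, Real.rpow_inv_rpow hsqpos.le hqr.ne']
      have hnorm1 : (∑ n ∈ s, |a n / σ| ^ q.toReal) ≤ 1 := by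
        have : ∀ n, |a n / σ| ^ q.toReal = |a n| ^ q.toReal / sq := by
          intro n
          rw [abs_div, abs_of_pos hσpos, Real.div_rpow (abs_nonneg _) hσpos.le, hσq]
        simp only [this, ← Finset.sum_div]
        rw [div_le_one hsqpos]
      have hb := hCb s (fun n => a n / σ) hnorm1
      have hsum : ∑ n ∈ s, (a n / σ) • x n = σ⁻¹ • ∑ n ∈ s, a n • x n := by
        rw [Finset.smul_sum]
        exact Finset.sum_congr rfl fun n _ => by
          rw [smul_smul, div_eq_inv_mul]
      rw [hsum, norm_smul, Real.norm_eq_abs, abs_of_pos (inv_pos.2 hσpos)] at hb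
      calc ‖∑ n ∈ s, a n • x n‖ = σ * (σ⁻¹ * ‖∑ n ∈ s, a n • x n‖) := by
            field_simp
        _ ≤ σ * C := mul_le_mul_of_nonneg_left hb hσpos.le
        _ = C * σ := mul_comm _ _
  -- Step 3: summability
  have hsum : ∀ a : lp (fun _ : ℕ => ℝ) q, Summable fun n => a n • x n := by
    intro a
    rw [summable_iff_vanishing]
    intro U hU
    obtain ⟨ε, hε, hball⟩ := Metric.mem_nhds_iff.1 hU
    have hsq : Summable fun n => ‖a n‖ ^ q.toReal := (lp.memℓp a).summable hqr
    set δ := (ε / (C + 1)) ^ q.toReal with hδ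
    have hεC : 0 < ε / (C + 1) := div_pos hε (by linarith)
    have hδpos : 0 < δ := Real.rpow_pos_of_pos hεC _
    obtain ⟨s₀, hs₀⟩ := summable_iff_vanishing.1 hsq (Set.Iio δ) (Iio_mem_nhds hδpos)
    refine ⟨s₀, fun t ht => ?_⟩
    have h1 : ∑ n ∈ t, ‖a n‖ ^ q.toReal < δ := hs₀ t ht
    have h2 : ‖∑ n ∈ t, a n • x n‖ ≤ C * (∑ n ∈ t, |a n| ^ q.toReal) ^ (1 / q.toReal) :=
      key2 t _
    have h3 : (∑ n ∈ t, |a n| ^ q.toReal) ^ (1 / q.toReal) ≤ ε / (C + 1) := by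
      have h4 : (∑ n ∈ t, |a n| ^ q.toReal) ≤ δ := by
        refine le_of_lt ?_
        simpa [Real.norm_eq_abs] using h1
      calc (∑ n ∈ t, |a n| ^ q.toReal) ^ (1 / q.toReal) ≤ δ ^ (1 / q.toReal) :=
            Real.rpow_le_rpow (Finset.sum_nonneg fun n _ => Real.rpow_nonneg (abs_nonneg _) _)
              h4 (by positivity)
        _ = ε / (C + 1) := by rw [hδ, one_div, Real.rpow_rpow_inv hεC.le hqr.ne']
    refine hball ?_
    rw [mem_ball_zero_iff]
    calc ‖∑ n ∈ t, a n • x n‖ ≤ C * (ε / (C + 1)) :=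
          h2.trans (mul_le_mul_of_nonneg_left h3 hC0)
      _ < (C + 1) * (ε / (C + 1)) := mul_lt_mul_of_pos_right (lt_add_one C) hεC
      _ = ε := by field_simp
  -- Step 4: the linear map
  set Slin : lp (fun _ : ℕ => ℝ) q →ₗ[ℝ] X :=
    { toFun := fun a => ∑' n, a n • x n
      map_add' := fun a b => by
        have h1 : (fun n => (a + b : lp (fun _ : ℕ => ℝ) q) n • x n)
            = fun n => a n • x n + b n • x n := by
          funext n
          rw [lp.coeFn_add, Pi.add_apply, add_smul]
        show ∑' n, ((a + b : lp (fun _ : ℕ => ℝ) q)) n • x n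
            = (∑' n, a n • x n) + ∑' n, b n • x n
        rw [h1]
        exact (hsum a).tsum_add (hsum b)
      map_smul' := fun c a => by
        have h1 : (fun n => (c • a : lp (fun _ : ℕ => ℝ) q) n • x n)
            = fun n => c • (a n • x n) := by
          funext n
          rw [lp.coeFn_smul, Pi.smul_apply, smul_smul, smul_eq_mul]
        show ∑' n, ((c • a : lp (fun _ : ℕ => ℝ) q)) n • x n = c • ∑' n, a n • x n
        rw [h1]
        exact (hsum a).tsum_const_smul c } with hSlin
  have hbound : ∀ a : lp (fun _ : ℕ => ℝ) q, ‖Slin a‖ ≤ C * ‖a‖ := by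
    intro a
    have ht : Tendsto (fun s : Finset ℕ => ‖∑ n ∈ s, a n • x n‖) atTop
        (𝓝 ‖∑' n, a n • x n‖) := ((hsum a).hasSum).norm
    refine le_of_tendsto ht (Eventually.of_forall fun s => ?_)
    refine (key2 s _).trans (mul_le_mul_of_nonneg_left ?_ hC0)
    have h5 : ∑ n ∈ s, |a n| ^ q.toReal ≤ ‖a‖ ^ q.toReal := by
      simpa [Real.norm_eq_abs] using lp.sum_rpow_le_norm_rpow hqr a s
    calc (∑ n ∈ s, |a n| ^ q.toReal) ^ (1 / q.toReal)
        ≤ (‖a‖ ^ q.toReal) ^ (1 / q.toReal) :=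
          Real.rpow_le_rpow (Finset.sum_nonneg fun n _ => Real.rpow_nonneg (abs_nonneg _) _)
            h5 (by positivity)
      _ = ‖a‖ := by rw [one_div, Real.rpow_rpow_inv (norm_nonneg _) hqr.ne']
  refine ⟨Slin.mkContinuous C hbound, fun n => ?_⟩
  rw [LinearMap.mkContinuous_apply, hSlin]
  simp only [LinearMap.coe_mk, AddHom.coe_mk]
  rw [tsum_eq_single n]
  · rw [lp.single_apply]
    simp
  · intro m hmn
    rw [lp.single_apply]
    simp [hmn]

end Aux3




section Aux4

variable {p q : ℝ≥0∞} [Fact (1 ≤ q)]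
variable {X : Type*} [NormedAddCommGroup X] [NormedSpace ℝ X] [CompleteSpace X]

/-- coordinate functional on `ℓ^q`. -/
def auxCoord (q : ℝ≥0∞) [Fact (1 ≤ q)] (hq0 : q ≠ 0) (n : ℕ) : lp (fun _ : ℕ => ℝ) q →L[ℝ] ℝ :=
  LinearMap.mkContinuous
    { toFun := fun a => a n
      map_add' := fun a b => by
        show ((a + b : lp (fun _ : ℕ => ℝ) q)) n = _
        rw [lp.coeFn_add]; rfl
      map_smul' := fun c a => by
        show ((c • a : lp (fun _ : ℕ => ℝ) q)) n = _
        rw [lp.coeFn_smul]; rfl }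
    1 (fun a => by
      simpa [Real.norm_eq_abs] using lp.norm_apply_le_norm hq0 a n)

lemma auxCoord_apply (hq0 : q ≠ 0) (n : ℕ) (a : lp (fun _ : ℕ => ℝ) q) :
    auxCoord q hq0 n a = a n := rfl

/-- single coordinate formula -/
lemma aux_single_coord (n m : ℕ) (c : ℝ) :
    (lp.single (E := fun _ : ℕ => ℝ) q n c) m = if m = n then c else 0 := by
  rcases eq_or_ne m n with rfl | hmn
  · simp [lp.single_apply]
  · simp [lp.single_apply, hmn]

/-- truncation coordinate formula -/
lemma aux_trunc_coord (a : lp (fun _ : ℕ => ℝ) q) (N m : ℕ) :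
    (∑ n ∈ Finset.range N, lp.single q n (a n) : lp (fun _ : ℕ => ℝ) q) m
      = if m < N then a m else 0 := by
  rw [lp.coeFn_sum, Finset.sum_apply]
  calc ∑ n ∈ Finset.range N, (lp.single (E := fun _ : ℕ => ℝ) q n (a n)) m
      = ∑ n ∈ Finset.range N, if m = n then a n else 0 :=
        Finset.sum_congr rfl fun n _ => aux_single_coord n m (a n)
    _ = if m ∈ Finset.range N then a m else 0 := Finset.sum_ite_eq _ _ _
    _ = if m < N then a m else 0 := by simp [Finset.mem_range]

/-- the residual after truncation -/
def auxR (q : ℝ≥0∞) [Fact (1 ≤ q)] (N : ℕ) (a : lp (fun _ : ℕ => ℝ) q) :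
    lp (fun _ : ℕ => ℝ) q :=
  a - ∑ n ∈ Finset.range N, lp.single q n (a n)

lemma auxR_coord (N : ℕ) (a : lp (fun _ : ℕ => ℝ) q) (m : ℕ) :
    (auxR q N a) m = if m < N then 0 else a m := by
  have h : (auxR q N a) m = a m - (∑ n ∈ Finset.range N, lp.single q n (a n) :
      lp (fun _ : ℕ => ℝ) q) m := by
    rw [auxR, lp.coeFn_sub]; rfl
  rw [h, aux_trunc_coord]
  by_cases hm : m < N <;> simp [hm]

lemma auxR_norm_le (hq0 : q ≠ 0) (hq' : q ≠ ⊤) (N : ℕ) (a : lp (fun _ : ℕ => ℝ) q) :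
    ‖auxR q N a‖ ≤ ‖a‖ := by
  have hqr : 0 < q.toReal := ENNReal.toReal_pos hq0 hq'
  rw [← Real.rpow_le_rpow_iff (norm_nonneg _) (norm_nonneg _) hqr]
  rw [show auxR q N a = a - ∑ n ∈ Finset.range N, lp.single q n (a n) from rfl]
  rw [lp.norm_compl_sum_single hqr a (Finset.range N)]
  have : 0 ≤ ∑ n ∈ Finset.range N, ‖a n‖ ^ q.toReal :=
    Finset.sum_nonneg fun n _ => Real.rpow_nonneg (norm_nonneg _) _
  linarith

/-- finite-rank approximations to `S` -/
def auxF (q : ℝ≥0∞) [Fact (1 ≤ q)] (hq0 : q ≠ 0) (S : lp (fun _ : ℕ => ℝ) q →L[ℝ] X)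
    (N : ℕ) : lp (fun _ : ℕ => ℝ) q →L[ℝ] X :=
  ∑ n ∈ Finset.range N, (auxCoord q hq0 n).smulRight (S (lp.single q n 1))

lemma auxF_apply (hq0 : q ≠ 0) (S : lp (fun _ : ℕ => ℝ) q →L[ℝ] X) (N : ℕ)
    (a : lp (fun _ : ℕ => ℝ) q) :
    auxF q hq0 S N a = S (∑ n ∈ Finset.range N, lp.single q n (a n)) := by
  rw [auxF, ContinuousLinearMap.sum_apply, map_sum]
  refine Finset.sum_congr rfl fun n _ => ?_
  rw [ContinuousLinearMap.smulRight_apply, auxCoord_apply]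
  conv_rhs => rw [aux_single_eq_smul, map_smul]

lemma aux_S_sub_F (hq0 : q ≠ 0) (S : lp (fun _ : ℕ => ℝ) q →L[ℝ] X) (N : ℕ)
    (a : lp (fun _ : ℕ => ℝ) q) :
    S a - auxF q hq0 S N a = S (auxR q N a) := by
  rw [auxF_apply, ← map_sub]
  rfl

/-- rank-one operators are compact. -/
lemma aux_rank_one {E : Type*} [NormedAddCommGroup E] [NormedSpace ℝ E]
    (φ : E →L[ℝ] ℝ) (v : X) : IsCompactOperator ⇑(φ.smulRight v) := by
  refine ⟨(fun t : ℝ => t • v) '' Set.Icc (-(‖φ‖ + 1)) (‖φ‖ + 1), ?_, ?_⟩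
  · exact isCompact_Icc.image (continuous_id.smul continuous_const)
  · refine Filter.mem_of_superset (Metric.ball_mem_nhds 0 one_pos) ?_
    intro a ha
    rw [mem_ball_zero_iff] at ha
    have h1 : |φ a| ≤ ‖φ‖ := by
      calc |φ a| = ‖φ a‖ := rfl
        _ ≤ ‖φ‖ * ‖a‖ := φ.le_opNorm a
        _ ≤ ‖φ‖ * 1 := mul_le_mul_of_nonneg_left ha.le (norm_nonneg _)
        _ = ‖φ‖ := mul_one _
    refine ⟨φ a, ?_, (ContinuousLinearMap.smulRight_apply (c := φ) (f := v) (x := a)).symm⟩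
    obtain ⟨h2, h3⟩ := abs_le.1 h1
    exact ⟨by linarith, by linarith⟩

lemma aux_sum_compact {E : Type*} [NormedAddCommGroup E] [NormedSpace ℝ E]
    (s : Finset ℕ) (G : ℕ → E →L[ℝ] X) (hG : ∀ n, IsCompactOperator ⇑(G n)) :
    IsCompactOperator ⇑(∑ n ∈ s, G n) := by
  classical
  induction s using Finset.cons_induction with
  | empty =>
    rw [Finset.sum_empty]
    exact isCompactOperator_zero
  | cons n s hns ih =>
    rw [Finset.sum_cons]
    have hco : ⇑(G n + ∑ m ∈ s, G m) = ⇑(G n) + ⇑(∑ m ∈ s, G m) := rfl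
    rw [hco]
    exact (hG n).add ih

end Aux4




section Aux5

variable {p q : ℝ≥0∞} [Fact (1 ≤ q)]
variable {X : Type*} [NormedAddCommGroup X] [NormedSpace ℝ X] [CompleteSpace X]

lemma aux_pconv_compact (hr : p.toReal.HolderConjugate q.toReal) (hp0 : p ≠ 0) (hp' : p ≠ ⊤)
    (hq0 : q ≠ 0) (hq' : q ≠ ⊤)
    (hCp : ∀ x : ℕ → X, (∀ f : StrongDual ℝ X, Memℓp (fun n => f (x n)) p) →
      Tendsto (fun n => ‖x n‖) atTop (𝓝 0))
    (S : lp (fun _ : ℕ => ℝ) q →L[ℝ] X) : IsCompactOperator ⇑S := by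
  classical
  have hqr : 0 < q.toReal := ENNReal.toReal_pos hq0 hq'
  have hpr : 0 < p.toReal := ENNReal.toReal_pos hp0 hp'
  -- the finite-rank approximations are compact
  have hFcompact : ∀ N, IsCompactOperator ⇑(auxF q hq0 S N) :=
    fun N => aux_sum_compact _ _ fun n => aux_rank_one _ _
  -- antitonicity of the approximation error
  have hAnti : ∀ {N N' : ℕ}, N ≤ N' → ‖S - auxF q hq0 S N'‖ ≤ ‖S - auxF q hq0 S N‖ := by
    intro N N' hNN'
    refine ContinuousLinearMap.opNorm_le_bound _ (norm_nonneg _) fun a => ?_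
    have h2 : auxR q N (auxR q N' a) = auxR q N' a := by
      refine lp.ext (funext fun m => ?_)
      rw [auxR_coord, auxR_coord]
      rcases lt_or_ge m N with h | h
      · rw [if_pos h, if_pos (lt_of_lt_of_le h hNN')]
      · rw [if_neg (not_lt.2 h)]
    calc ‖(S - auxF q hq0 S N') a‖ = ‖S (auxR q N' a)‖ := by
          rw [ContinuousLinearMap.sub_apply, aux_S_sub_F]
      _ = ‖S (auxR q N (auxR q N' a))‖ := by rw [h2]
      _ = ‖(S - auxF q hq0 S N) (auxR q N' a)‖ := by
          rw [ContinuousLinearMap.sub_apply, aux_S_sub_F]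
      _ ≤ ‖S - auxF q hq0 S N‖ * ‖auxR q N' a‖ := (S - auxF q hq0 S N).le_opNorm _
      _ ≤ ‖S - auxF q hq0 S N‖ * ‖a‖ :=
          mul_le_mul_of_nonneg_left (auxR_norm_le hq0 hq' N' a) (norm_nonneg _)
  -- main claim: the error tends to zero
  have htends : Tendsto (fun N => ‖S - auxF q hq0 S N‖) atTop (𝓝 0) := by
    by_contra hcon
    have hex : ∃ ε > (0:ℝ), ∀ N, ε ≤ ‖S - auxF q hq0 S N‖ := by
      by_contra hex
      push_neg at hex
      apply hcon
      rw [Metric.tendsto_atTop]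
      intro ε hε
      obtain ⟨N, hN⟩ := hex ε hε
      refine ⟨N, fun N' hN' => ?_⟩
      rw [Real.dist_eq, sub_zero, abs_of_nonneg (norm_nonneg _)]
      exact lt_of_le_of_lt (hAnti hN') hN
    obtain ⟨ε, hε, hεle⟩ := hex
    -- block construction
    have hBLOCK : ∀ N, ∃ (M : ℕ) (c : lp (fun _ : ℕ => ℝ) q), N ≤ M ∧ ‖c‖ ≤ 1 ∧
        (∀ m, m < N → c m = 0) ∧ (∀ m, M ≤ m → c m = 0) ∧ ε / 2 < ‖S c‖ := by
      intro N
      have h1 : ¬ ∀ a : lp (fun _ : ℕ => ℝ) q,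
          ‖(S - auxF q hq0 S N) a‖ ≤ (ε/2) * ‖a‖ := by
        intro hall
        have := ContinuousLinearMap.opNorm_le_bound _ (by positivity) hall
        linarith [hεle N]
      push_neg at h1
      obtain ⟨a, ha⟩ := h1
      have ha0 : a ≠ 0 := by
        rintro rfl
        simp at ha
      have hna : (0:ℝ) < ‖a‖ := norm_pos_iff.2 ha0
      set u : lp (fun _ : ℕ => ℝ) q := ‖a‖⁻¹ • a with hu
      have hu1 : ‖u‖ = 1 := norm_smul_inv_norm ha0
      have hub : ε/2 < ‖(S - auxF q hq0 S N) u‖ := by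
        have h3 : ‖(S - auxF q hq0 S N) u‖ = ‖(S - auxF q hq0 S N) a‖ / ‖a‖ := by
          rw [hu, map_smul, norm_smul, Real.norm_eq_abs,
            abs_of_nonneg (inv_nonneg.2 (norm_nonneg a)), inv_mul_eq_div]
        rw [h3, lt_div_iff₀ hna]
        linarith
      set b := auxR q N u with hb
      have hbn : ‖b‖ ≤ 1 := le_trans (auxR_norm_le hq0 hq' N u) hu1.le
      have hSb : ε/2 < ‖S b‖ := by
        have h4 : (S - auxF q hq0 S N) u = S b := by
          rw [ContinuousLinearMap.sub_apply, aux_S_sub_F, hb]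
        rwa [h4] at hub
      have hminor : Tendsto (fun M => ∑ n ∈ Finset.range M, lp.single q n (b n)) atTop
          (𝓝 b) := (lp.hasSum_single hq' b).tendsto_sum_nat
      have hcont : Tendsto (fun M => ‖S (∑ n ∈ Finset.range M, lp.single q n (b n))‖) atTop
          (𝓝 ‖S b‖) := ((S.continuous.tendsto b).comp hminor).norm
      have hev : ∀ᶠ M in atTop,
          ε/2 < ‖S (∑ n ∈ Finset.range M, lp.single q n (b n))‖ :=
        hcont.eventually (eventually_gt_nhds hSb)
      obtain ⟨M, hM1, hM2⟩ := (hev.and (eventually_ge_atTop N)).exists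
      refine ⟨M, ∑ n ∈ Finset.range M, lp.single q n (b n), hM2, ?_, ?_, ?_, hM1⟩
      · exact (aux_trunc_norm_le hq0 hq' b _).trans hbn
      · intro m hm
        rw [aux_trunc_coord]
        by_cases h : m < M
        · rw [if_pos h, hb, auxR_coord, if_pos hm]
        · rw [if_neg h]
      · intro m hm
        rw [aux_trunc_coord, if_neg (not_lt.2 hm)]
    choose M c hMN hc1 hc2 hc3 hc4 using hBLOCK
    set Nk : ℕ → ℕ := fun k => Nat.rec 0 (fun _ prev => M prev) k with hNkdef
    have hNk0 : Nk 0 = 0 := rfl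
    have hNksucc : ∀ k, Nk (k+1) = M (Nk k) := fun k => rfl
    have hNkmono : Monotone Nk := monotone_nat_of_le_succ fun k => by
      rw [hNksucc]; exact hMN _
    set y : ℕ → X := fun k => S (c (Nk k)) with hy
    have hwps : ∀ f : StrongDual ℝ X, Memℓp (fun k => f (y k)) p := by
      intro f
      set d : ℕ → ℝ := fun n => (f.comp S) (lp.single q n 1) with hdd
      have hdsum : ∀ s : Finset ℕ, ∑ n ∈ s, |d n| ^ p.toReal ≤ ‖f.comp S‖ ^ p.toReal :=
        fun s => aux_dual_sum hr hq0 hq' (f.comp S) s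
      have hptw : ∀ k, ‖f (y k)‖ ^ p.toReal ≤
          ∑ n ∈ Finset.Ico (Nk k) (Nk (k+1)), |d n| ^ p.toReal := by
        intro k
        have hck : c (Nk k) = ∑ n ∈ Finset.range (Nk (k+1)), lp.single q n ((c (Nk k)) n) := by
          refine lp.ext (funext fun m => ?_)
          rw [aux_trunc_coord]
          by_cases h : m < Nk (k+1)
          · rw [if_pos h]
          · rw [if_neg h]
            exact hc3 (Nk k) m (by rw [← hNksucc]; exact not_lt.1 h)
        have hfval : f (y k) = ∑ n ∈ Finset.Ico (Nk k) (Nk (k+1)), (c (Nk k)) n * d n := by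
          have h1 : f (y k) = ∑ n ∈ Finset.range (Nk (k+1)), (c (Nk k)) n * d n := by
            rw [hy]
            show f (S (c (Nk k))) = _
            conv_lhs => rw [hck]
            rw [map_sum, map_sum]
            refine Finset.sum_congr rfl fun n _ => ?_
            conv_lhs => rw [aux_single_eq_smul, map_smul, map_smul]
            rw [smul_eq_mul, hdd]
            rfl
          rw [h1, Finset.range_eq_Ico,
            ← Finset.sum_Ico_consecutive _ (Nat.zero_le (Nk k)) (hNkmono k.le_succ)]
          have h0 : ∑ n ∈ Finset.Ico 0 (Nk k), (c (Nk k)) n * d n = 0 :=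
            Finset.sum_eq_zero fun n hn => by
              rw [hc2 (Nk k) n (Finset.mem_Ico.1 hn).2, zero_mul]
          rw [h0, zero_add]
        have hsum_nonneg : (0:ℝ) ≤ ∑ n ∈ Finset.Ico (Nk k) (Nk (k+1)), |d n| ^ p.toReal :=
          Finset.sum_nonneg fun n _ => Real.rpow_nonneg (abs_nonneg _) _
        have hq1 : (∑ n ∈ Finset.Ico (Nk k) (Nk (k+1)), |(c (Nk k)) n| ^ q.toReal)
            ^ (1/q.toReal) ≤ 1 := by
          refine Real.rpow_le_one
            (Finset.sum_nonneg fun n _ => Real.rpow_nonneg (abs_nonneg _) _) ?_ (by positivity)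
          calc ∑ n ∈ Finset.Ico (Nk k) (Nk (k+1)), |(c (Nk k)) n| ^ q.toReal
              ≤ ‖c (Nk k)‖ ^ q.toReal := by
                simpa [Real.norm_eq_abs] using lp.sum_rpow_le_norm_rpow hqr (c (Nk k)) _
            _ ≤ 1 := Real.rpow_le_one (norm_nonneg _) (hc1 _) hqr.le
        have habs : |∑ n ∈ Finset.Ico (Nk k) (Nk (k+1)), (c (Nk k)) n * d n| ≤
            (∑ n ∈ Finset.Ico (Nk k) (Nk (k+1)), |d n| ^ p.toReal) ^ (1/p.toReal) := by
          refine (aux_holder hr _ (fun n => (c (Nk k)) n) d).trans ?_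
          calc (∑ n ∈ Finset.Ico (Nk k) (Nk (k+1)), |d n| ^ p.toReal) ^ (1/p.toReal) *
              (∑ n ∈ Finset.Ico (Nk k) (Nk (k+1)), |(c (Nk k)) n| ^ q.toReal) ^ (1/q.toReal)
              ≤ (∑ n ∈ Finset.Ico (Nk k) (Nk (k+1)), |d n| ^ p.toReal) ^ (1/p.toReal) * 1 :=
                mul_le_mul_of_nonneg_left hq1 (Real.rpow_nonneg hsum_nonneg _)
            _ = _ := mul_one _
        rw [hfval, Real.norm_eq_abs]
        calc |∑ n ∈ Finset.Ico (Nk k) (Nk (k+1)), (c (Nk k)) n * d n| ^ p.toReal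
            ≤ ((∑ n ∈ Finset.Ico (Nk k) (Nk (k+1)), |d n| ^ p.toReal) ^ (1/p.toReal))
              ^ p.toReal := Real.rpow_le_rpow (abs_nonneg _) habs hr.nonneg
          _ = ∑ n ∈ Finset.Ico (Nk k) (Nk (k+1)), |d n| ^ p.toReal := by
              rw [one_div, Real.rpow_inv_rpow hsum_nonneg hr.ne_zero]
      have hIco : ∀ K, ∑ k ∈ Finset.range K,
          (∑ n ∈ Finset.Ico (Nk k) (Nk (k+1)), |d n| ^ p.toReal)
          = ∑ n ∈ Finset.Ico 0 (Nk K), |d n| ^ p.toReal := by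
        intro K
        induction K with
        | zero => simp [hNk0]
        | succ K ih =>
          rw [Finset.sum_range_succ, ih,
            Finset.sum_Ico_consecutive _ (Nat.zero_le _) (hNkmono K.le_succ)]
      have hmaj : Summable (fun k => ∑ n ∈ Finset.Ico (Nk k) (Nk (k+1)),
          |d n| ^ p.toReal) := by
        refine summable_of_sum_range_le (c := ‖f.comp S‖ ^ p.toReal)
          (fun k => Finset.sum_nonneg fun n _ => Real.rpow_nonneg (abs_nonneg _) _)
          (fun K => ?_)
        rw [hIco]
        exact hdsum _
      exact memℓp_gen (Summable.of_nonneg_of_le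
        (fun k => Real.rpow_nonneg (norm_nonneg _) _) hptw hmaj)
    have hnull := hCp y hwps
    have h2 : ∀ᶠ k in atTop, ‖y k‖ < ε/2 :=
      hnull.eventually (eventually_lt_nhds (half_pos hε))
    obtain ⟨k, hk⟩ := h2.exists
    have : ε/2 < ‖y k‖ := hc4 (Nk k)
    linarith
  have htF : Tendsto (fun N => auxF q hq0 S N) atTop (𝓝 S) := by
    rw [tendsto_iff_norm_sub_tendsto_zero]
    simpa [norm_sub_rev] using htends
  exact isCompactOperator_of_tendsto htF (Eventually.of_forall fun N => hFcompact N)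

end Aux5

end MyAux

/-- For `1 < p < ∞` with conjugate exponent `q`, the following are
equivalent: (i) `B_{X*}` is a weakly-`p`-L-set; (ii) every operator `ℓ_q → X` is
compact; (iii) the identity of `X` is `p`-convergent (`X ∈ C_p`). -/
theorem stmt_11 {X : Type*} [NormedAddCommGroup X] [NormedSpace ℝ X] [CompleteSpace X]
    (p q : ℝ≥0∞) (hp : 1 < p) (hp' : p ≠ ⊤) [Fact (1 ≤ q)] (hpq : p⁻¹ + q⁻¹ = 1) :
    (WeaklyPLSet p (closedBall (0 : StrongDual ℝ X) 1) ↔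
      (∀ S : lp (fun _ : ℕ => ℝ) q →L[ℝ] X, IsCompactOperator S)) ∧
    (WeaklyPLSet p (closedBall (0 : StrongDual ℝ X) 1) ↔
      PConvergent p (ContinuousLinearMap.id ℝ X)) := by
  obtain ⟨hr, hq0, hq'⟩ := aux_conj hp hp' hpq
  have hp0 : p ≠ 0 := (zero_lt_one.trans hp).ne'
  have hpr : 0 < p.toReal := ENNReal.toReal_pos hp0 hp'
  -- (i) ↔ (iii)
  have e3 : WeaklyPLSet p (closedBall (0 : StrongDual ℝ X) 1) ↔
      PConvergent p (ContinuousLinearMap.id ℝ X) := by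
    constructor
    · rintro ⟨-, H⟩ x hx
      show Tendsto (fun n => ‖(ContinuousLinearMap.id ℝ X) (x n)‖) atTop (𝓝 0)
      simp only [ContinuousLinearMap.id_apply]
      rw [Metric.tendsto_atTop]
      intro ε hε
      obtain ⟨N, hN⟩ := H x hx (ε/2) (half_pos hε)
      refine ⟨N, fun n hn => ?_⟩
      rw [Real.dist_eq, sub_zero, abs_of_nonneg (norm_nonneg _)]
      have hxn : ‖x n‖ ≤ ε/2 := by
        refine NormedSpace.norm_le_dual_bound ℝ (x n) (by positivity) fun f => ?_
        rcases eq_or_ne f 0 with rfl | hf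
        · simp
        · have hfn : (0:ℝ) < ‖f‖ := norm_pos_iff.2 hf
          have hmem : (‖f‖⁻¹ • f) ∈ closedBall (0 : StrongDual ℝ X) 1 := by
            rw [mem_closedBall_zero_iff, norm_smul, Real.norm_eq_abs,
              abs_of_nonneg (inv_nonneg.2 (norm_nonneg f)), inv_mul_cancel₀ hfn.ne']
          have h1 : |(‖f‖⁻¹ • f) (x n)| ≤ ε / 2 := hN n hn _ hmem
          have happ : (‖f‖⁻¹ • f) (x n) = ‖f‖⁻¹ * f (x n) := rfl
          rw [happ, abs_mul, abs_of_nonneg (inv_nonneg.2 (norm_nonneg f))] at h1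
          rw [Real.norm_eq_abs]
          calc |f (x n)| = ‖f‖ * (‖f‖⁻¹ * |f (x n)|) := by field_simp
            _ ≤ ‖f‖ * (ε/2) := mul_le_mul_of_nonneg_left h1 (norm_nonneg f)
            _ = ε/2 * ‖f‖ := mul_comm _ _
      linarith
    · intro h3
      refine ⟨isBounded_closedBall, fun x hx ε hε => ?_⟩
      have ht : Tendsto (fun n => ‖x n‖) atTop (𝓝 0) := by
        have := h3 x hx
        simpa only [NormNull, ContinuousLinearMap.id_apply] using this
      rw [Metric.tendsto_atTop] at ht
      obtain ⟨N, hN⟩ := ht ε hε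
      refine ⟨N, fun n hn g hg => ?_⟩
      rw [mem_closedBall_zero_iff] at hg
      have h1 : ‖x n‖ < ε := by
        have := hN n hn
        rwa [Real.dist_eq, sub_zero, abs_of_nonneg (norm_nonneg _)] at this
      calc |g (x n)| = ‖g (x n)‖ := rfl
        _ ≤ ‖g‖ * ‖x n‖ := g.le_opNorm _
        _ ≤ 1 * ‖x n‖ := mul_le_mul_of_nonneg_right hg (norm_nonneg _)
        _ = ‖x n‖ := one_mul _
        _ ≤ ε := h1.le
  -- (iii) → (ii)
  have e32 : PConvergent p (ContinuousLinearMap.id ℝ X) →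
      ∀ S : lp (fun _ : ℕ => ℝ) q →L[ℝ] X, IsCompactOperator S := by
    intro h3 S
    refine aux_pconv_compact hr hp0 hp' hq0 hq' (fun x hx => ?_) S
    have := h3 x hx
    simpa only [NormNull, ContinuousLinearMap.id_apply] using this
  -- (ii) → (iii)
  have e23 : (∀ S : lp (fun _ : ℕ => ℝ) q →L[ℝ] X, IsCompactOperator S) →
      PConvergent p (ContinuousLinearMap.id ℝ X) := by
    intro hS x hx
    show Tendsto (fun n => ‖(ContinuousLinearMap.id ℝ X) (x n)‖) atTop (𝓝 0)
    simp only [ContinuousLinearMap.id_apply]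
    obtain ⟨S, hSx⟩ := aux_opOfWps hr hp0 hp' hq0 hq' x hx
    by_contra hcon
    rw [Metric.tendsto_atTop] at hcon
    push_neg at hcon
    obtain ⟨ε, hε, hfreq⟩ := hcon
    have hfreq' : ∀ N, ∃ n ≥ N, ε ≤ ‖x n‖ := by
      intro N
      obtain ⟨n, hn1, hn2⟩ := hfreq N
      exact ⟨n, hn1, by rwa [Real.dist_eq, sub_zero, abs_of_nonneg (norm_nonneg _)] at hn2⟩
    obtain ⟨φ, hφ, hφ2⟩ := extraction_of_frequently_atTop (frequently_atTop.2 hfreq')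
    have hKcpt : IsCompact (closure (⇑S '' closedBall 0 1)) := by
      have h := IsCompactOperator.isCompact_closure_image_closedBall
        (f := (S : lp (fun _ : ℕ => ℝ) q →ₗ[ℝ] X)) (hS S) 1
      exact h
    have hmem : ∀ k, S (lp.single q (φ k) 1) ∈ closure (⇑S '' closedBall 0 1) := by
      intro k
      refine subset_closure ⟨lp.single q (φ k) 1, ?_, rfl⟩
      rw [mem_closedBall_zero_iff]
      have h2 : ‖lp.single (E := fun _ : ℕ => ℝ) q (φ k) (1:ℝ)‖ = ‖(1:ℝ)‖ :=
        lp.norm_single (E := fun _ : ℕ => ℝ) (pos_iff_ne_zero.2 hq0) (φ k) (1:ℝ)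
      rw [h2, norm_one]
    obtain ⟨y, -, ψ, hψ, hty⟩ := hKcpt.tendsto_subseq hmem
    have hty' : Tendsto (fun j => x (φ (ψ j))) atTop (𝓝 y) := by
      have h3 : (fun k => S (lp.single q (φ k) 1)) ∘ ψ = fun j => x (φ (ψ j)) := by
        funext j
        rw [Function.comp_apply, hSx]
      rwa [h3] at hty
    have hy0 : y = 0 := by
      refine NormedSpace.eq_zero_of_forall_dual_eq_zero ℝ fun f => ?_
      have h5 : Tendsto (fun n => f (x n)) atTop (𝓝 0) := by
        have hsumm : Summable (fun n => ‖f (x n)‖ ^ p.toReal) := (hx f).summable hpr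
        have h6 : Tendsto (fun n => ‖f (x n)‖ ^ p.toReal) atTop (𝓝 0) :=
          hsumm.tendsto_atTop_zero
        have h7 : Tendsto (fun n => (‖f (x n)‖ ^ p.toReal) ^ (p.toReal)⁻¹) atTop
            (𝓝 ((0:ℝ) ^ (p.toReal)⁻¹)) := h6.rpow_const (Or.inr (by positivity))
        rw [Real.zero_rpow (inv_ne_zero hpr.ne')] at h7
        have h8 : (fun n => (‖f (x n)‖ ^ p.toReal) ^ (p.toReal)⁻¹) = fun n => ‖f (x n)‖ := by
          funext n
          rw [Real.rpow_rpow_inv (norm_nonneg _) hpr.ne']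
        rw [h8] at h7
        exact tendsto_zero_iff_norm_tendsto_zero.2 h7
      have h9 : Tendsto (fun j => f (x (φ (ψ j)))) atTop (𝓝 (f y)) :=
        (f.continuous.tendsto y).comp hty'
      have h10 : Tendsto (fun j => f (x (φ (ψ j)))) atTop (𝓝 0) := by
        have := h5.comp ((hφ.comp hψ).tendsto_atTop)
        exact this
      exact tendsto_nhds_unique h9 h10
    have hnorm : ε ≤ ‖y‖ := by
      have h11 : Tendsto (fun j => ‖x (φ (ψ j))‖) atTop (𝓝 ‖y‖) := hty'.norm
      exact ge_of_tendsto h11 (Eventually.of_forall fun j => hφ2 (ψ j))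
    rw [hy0, norm_zero] at hnorm
    linarith
  exact ⟨e3.trans ⟨fun h3 S => e32 h3 S, fun h2 => e23 h2⟩, e3⟩
end
end

section
/- Let 1 ≤ p < ∞. If Y is a closed subspace of a dual space X* and X has property RDP_p, then every weakly-p-Dunford-Pettis subset of Y is relatively weakly compact (Y has property RDP*_p). In particular, if Y* has property RDP_p then Y has property RDP*_p. -/
open Filter Topology Metric NormedSpace Bornology ENNReal

noncomputable section

/-- A continuous linear functional vanishing on a closed submodule, nonzero at a point outside. -/
lemma sep_of_not_mem {E : Type*} [NormedAddCommGroup E] [NormedSpace ℝ E]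
    (M : Submodule ℝ E) (hM : IsClosed (M : Set E)) {a : E} (ha : a ∉ M) :
    ∃ f : StrongDual ℝ E, (∀ m ∈ M, f m = 0) ∧ f a ≠ 0 := by
  obtain ⟨f, u, hfu, hua⟩ := geometric_hahn_banach_closed_point M.convex hM ha
  have h0 : (0 : ℝ) < u := by simpa using hfu 0 M.zero_mem
  have hvanish : ∀ m ∈ M, f m = 0 := by
    intro m hm
    by_contra hne
    have hkey : ∀ t : ℝ, t * f m < u := fun t => by
      simpa using hfu (t • m) (M.smul_mem t hm)
    have h1 := hkey ((u + 1) / f m)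
    rw [div_mul_cancel₀ _ hne] at h1
    linarith
  exact ⟨f, hvanish, by intro h; rw [h] at hua; linarith⟩

/-- Main lemma: if `X` has `RDP_p` and `e : W → X*` is an embedding with closed range,
then every weakly-`p`-Dunford-Pettis subset of `W` is relatively weakly compact. -/
lemma main_lemma {X W : Type*} [NormedAddCommGroup X] [NormedSpace ℝ X]
    [NormedAddCommGroup W] [NormedSpace ℝ W] {p : ℝ≥0∞}
    (hX : RDPp p X) (e : W →L[ℝ] StrongDual ℝ X) {c : ℝ} (hc : 0 < c)
    (hlow : ∀ w, c * ‖w‖ ≤ ‖e w‖) (hcl : IsClosed (Set.range ⇑e))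
    (K : Set W) (hK : WeaklyPDP p K) : RelWeaklyCompact K := by
  classical
  have hinj : Function.Injective e := by
    intro w₁ w₂ h
    have h1 : c * ‖w₁ - w₂‖ ≤ ‖e (w₁ - w₂)‖ := hlow _
    rw [map_sub, h, sub_self, norm_zero] at h1
    have h2 : ‖w₁ - w₂‖ = 0 :=
      le_antisymm (by nlinarith [norm_nonneg (w₁ - w₂)]) (norm_nonneg _)
    exact sub_eq_zero.mp (norm_eq_zero.mp h2)
  -- the image of K is a weakly-p-L-subset of X*
  have hA : WeaklyPLSet p (⇑e '' K) := by
    constructor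
    · obtain ⟨r, hr⟩ := (isBounded_iff_forall_norm_le).mp hK.1
      refine (isBounded_iff_forall_norm_le).mpr ⟨‖e‖ * r, ?_⟩
      rintro _ ⟨k, hk, rfl⟩
      calc ‖e k‖ ≤ ‖e‖ * ‖k‖ := e.le_opNorm k
        _ ≤ ‖e‖ * r := by
            have := hr k hk
            have := norm_nonneg (e : W →L[ℝ] StrongDual ℝ X)
            nlinarith
    · intro x hx
      set f : ℕ → StrongDual ℝ W :=
        fun n => adjOp e (NormedSpace.inclusionInDoubleDual ℝ X (x n)) with hf
      have hfsumm : WeaklyPSummable p f := by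
        intro F
        exact hx (F.comp ((adjOp e).comp (NormedSpace.inclusionInDoubleDual ℝ X)))
      have hUnif := hK.2 f hfsumm
      intro ε hε
      obtain ⟨N, hN⟩ := hUnif ε hε
      refine ⟨N, fun n hn g hg => ?_⟩
      obtain ⟨k, hk, rfl⟩ := hg
      exact hN n hn k hk
  -- apply RDP_p
  have hcompact := hX _ hA
  intro y hy
  obtain ⟨a, φ, hφ, hconv⟩ := hcompact (fun n => e (y n)) (fun n => ⟨y n, hy n, rfl⟩)
  -- the limit lies in the range of e
  set M : Submodule ℝ (StrongDual ℝ X) := LinearMap.range (e : W →ₗ[ℝ] StrongDual ℝ X) with hM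
  have hMset : (M : Set (StrongDual ℝ X)) = Set.range ⇑e := by
    ext v; simp [hM, LinearMap.mem_range]
  have haM : a ∈ M := by
    by_contra hnot
    obtain ⟨F, hFvan, hFa⟩ := sep_of_not_mem M (hMset ▸ hcl) hnot
    have h1 : Tendsto (fun k => F (e (y (φ k)))) atTop (𝓝 (F a)) := hconv F
    have h2 : (fun k => F (e (y (φ k)))) = fun _ => (0 : ℝ) := by
      funext k
      exact hFvan _ ⟨y (φ k), rfl⟩
    rw [h2] at h1
    exact hFa (tendsto_nhds_unique tendsto_const_nhds h1).symm
  obtain ⟨b, hb⟩ := haM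
  refine ⟨b, φ, hφ, ?_⟩
  -- every functional on W extends through e
  intro g
  set eqv : W ≃ₗ[ℝ] M := LinearEquiv.ofInjective (e : W →ₗ[ℝ] StrongDual ℝ X) hinj with heqv
  have heqv_apply : ∀ w : W, ((eqv w : M) : StrongDual ℝ X) = e w := fun w => rfl
  have hsymm : ∀ w : W, eqv.symm (eqv w) = w := fun w => eqv.symm_apply_apply w
  set ℓ : M →ₗ[ℝ] ℝ := (g : W →ₗ[ℝ] ℝ).comp (eqv.symm : M →ₗ[ℝ] W) with hℓ
  have hbound : ∀ m : M, ‖ℓ m‖ ≤ (‖g‖ / c) * ‖m‖ := by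
    intro m
    have h1 : ‖ℓ m‖ ≤ ‖g‖ * ‖eqv.symm m‖ := g.le_opNorm _
    have h2 : c * ‖eqv.symm m‖ ≤ ‖(m : StrongDual ℝ X)‖ := by
      have := hlow (eqv.symm m)
      rwa [show e (eqv.symm m) = (m : StrongDual ℝ X) by
        conv_rhs => rw [← eqv.apply_symm_apply m]
        exact (heqv_apply _).symm] at this
    have hg0 : (0:ℝ) ≤ ‖g‖ := norm_nonneg _
    have : ‖eqv.symm m‖ ≤ ‖(m : StrongDual ℝ X)‖ / c := by
      rw [le_div_iff₀ hc]; linarith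
    calc ‖ℓ m‖ ≤ ‖g‖ * ‖eqv.symm m‖ := h1
      _ ≤ ‖g‖ * (‖(m : StrongDual ℝ X)‖ / c) := by nlinarith
      _ = (‖g‖ / c) * ‖m‖ := by
            have hmn : ‖(m : StrongDual ℝ X)‖ = ‖m‖ := rfl
            rw [← hmn]; ring
  set ℓc : M →L[ℝ] ℝ := LinearMap.mkContinuous (E := M) ℓ (‖g‖ / c) hbound with hℓc
  obtain ⟨G, hGext, -⟩ := exists_extension_norm_eq M ℓc
  have hGe : ∀ w : W, G (e w) = g w := by
    intro w
    have h1 : G ((eqv w : M) : StrongDual ℝ X) = ℓc (eqv w) := hGext (eqv w)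
    rw [heqv_apply w] at h1
    rw [h1]
    show ℓ (eqv w) = g w
    simp [hℓ, hsymm w]
  have h1 : Tendsto (fun k => G (e (y (φ k)))) atTop (𝓝 (G a)) := hconv G
  have h2 : (fun k => G (e (y (φ k)))) = fun k => g (y (φ k)) := by
    funext k; exact hGe _
  rw [h2] at h1
  have hb' : e b = a := hb
  have h3 : G a = g b := by rw [← hb']; exact hGe b
  rwa [h3] at h1

/-- For `1 ≤ p < ∞`: if `Y` is a closed subspace of a dual space `X*`
and `X` has property `RDP_p`, then every weakly-`p`-Dunford-Pettis subset of `Y` is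
relatively weakly compact (`Y` has property `RDP*_p`); in particular if `Z*` has
property `RDP_p` then `Z` has property `RDP*_p`. -/
theorem stmt_14 {X Z : Type*} [NormedAddCommGroup X] [NormedSpace ℝ X] [CompleteSpace X]
    [NormedAddCommGroup Z] [NormedSpace ℝ Z] [CompleteSpace Z]
    (p : ℝ≥0∞) (hp : 1 ≤ p) (hp' : p ≠ ⊤) :
    ((RDPp p X → ∀ Y : Submodule ℝ (StrongDual ℝ X), IsClosed (Y : Set (StrongDual ℝ X)) →
        ∀ K : Set ↥Y, WeaklyPDP p K → RelWeaklyCompact K)) ∧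
    (RDPp p (StrongDual ℝ Z) → ∀ K : Set Z, WeaklyPDP p K → RelWeaklyCompact K) := by
  constructor
  · intro hX Y hYcl K hK
    refine main_lemma hX Y.subtypeL (c := 1) one_pos (fun w => by simp) ?_ K hK
    have : Set.range ⇑Y.subtypeL = (Y : Set (StrongDual ℝ X)) := by
      ext v
      simp [Submodule.coe_subtypeL', Subtype.range_coe_subtype]
    rw [this]; exact hYcl
  · intro hZ K hK
    have hiso : Isometry ⇑(NormedSpace.inclusionInDoubleDual ℝ Z) :=
      (NormedSpace.inclusionInDoubleDualLi ℝ (E := Z)).isometry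
    refine main_lemma hZ (NormedSpace.inclusionInDoubleDual ℝ Z) (c := 1) one_pos
      (fun w => by rw [one_mul, hiso.norm_map_of_map_zero (map_zero _)]) ?_ K hK
    exact hiso.isClosedEmbedding.isClosed_range
end
end

section
/- Let 1 ≤ p < ∞. If X* has the p-Gelfand-Phillips property, Y has the Schur property, and M is a closed subspace of L(X, Y), then M has the p-Gelfand-Phillips property. -/
open Filter Topology Metric NormedSpace Bornology ENNReal

noncomputable section

/-- Auxiliary: a subsequence (along an injective map) of an `ℓ_p` sequence is `ℓ_p`. -/
lemma memℓp_comp_injective_aux {f : ℕ → ℝ} {p : ℝ≥0∞} (hp : 1 ≤ p) (hp' : p ≠ ⊤)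
    (h : Memℓp f p) {ι : ℕ → ℕ} (hι : Function.Injective ι) : Memℓp (fun k => f (ι k)) p := by
  have hp0 : p ≠ 0 := by
    intro h0; rw [h0] at hp; exact (by norm_num : ¬ ((1:ℝ≥0∞) ≤ 0)) hp
  have hpt : 0 < p.toReal := ENNReal.toReal_pos hp0 hp'
  rw [memℓp_gen_iff hpt] at h ⊢
  exact h.comp_injective hι

/-- Auxiliary: a nonnegative real sequence that does not tend to `0` is frequently
bounded below by some positive `ε`. -/
lemma exists_subseq_of_not_tendsto {u : ℕ → ℝ}
    (h : ¬ Tendsto u atTop (𝓝 0)) :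
    ∃ ε > (0:ℝ), ∃ φ : ℕ → ℕ, StrictMono φ ∧ ∀ k, ε ≤ |u (φ k)| := by
  rw [Metric.tendsto_atTop] at h
  push_neg at h
  obtain ⟨ε, hε, hfreq⟩ := h
  have hf : ∃ᶠ n in atTop, ε ≤ |u n| := by
    rw [Filter.frequently_atTop]
    intro N
    obtain ⟨n, hn, hd⟩ := hfreq N
    exact ⟨n, hn, by simpa [Real.dist_eq] using hd⟩
  obtain ⟨φ, hφ, hφ'⟩ := Filter.extraction_of_frequently_atTop hf
  exact ⟨ε, hε, φ, hφ, hφ'⟩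

set_option synthInstance.maxHeartbeats 1000000 in
set_option maxHeartbeats 1000000 in
/-- For `1 ≤ p < ∞`, if `X*` has the `p`-Gelfand-Phillips property,
`Y` has the Schur property, and `M` is a closed subspace of `L(X, Y)`, then `M` has
the `p`-Gelfand-Phillips property. -/
theorem stmt_18 {X Y : Type*} [NormedAddCommGroup X] [NormedSpace ℝ X] [CompleteSpace X]
    [NormedAddCommGroup Y] [NormedSpace ℝ Y] [CompleteSpace Y]
    (p : ℝ≥0∞) (hp : 1 ≤ p) (hp' : p ≠ ⊤)
    (hX : pGP p (StrongDual ℝ X)) (hY : SchurSpace Y)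
    (M : Submodule ℝ (X →L[ℝ] Y)) (hMc : IsClosed (M : Set (X →L[ℝ] Y))) :
    pGP p ↥M := by
  intro T hlim hsum
  by_contra hnot
  -- extract subsequence with norms bounded below
  obtain ⟨ε, hε, φ, hφmono, hφ⟩ := exists_subseq_of_not_tendsto hnot
  have hφ' : ∀ k, ε ≤ ‖T (φ k)‖ := fun k => (hφ k).trans_eq (abs_norm _)
  -- choose almost norming unit vectors
  have hx : ∀ k, ∃ x : X, ‖x‖ < 1 ∧ ε / 2 < ‖(T (φ k) : X →L[ℝ] Y) x‖ := by
    intro k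
    apply ContinuousLinearMap.exists_lt_apply_of_lt_opNorm
    calc ε / 2 < ε := by linarith
      _ ≤ ‖T (φ k)‖ := hφ' k
  choose x hx1 hx2 using hx
  set y : ℕ → Y := fun k => (T (φ k) : X →L[ℝ] Y) (x k) with hy
  -- y is not weakly null, by the Schur property
  have hnw : ¬ WeaklyConvTo y 0 := by
    intro hw
    have := hY y 0 hw
    have hnorm : Tendsto (fun k => ‖y k‖) atTop (𝓝 0) := by
      simpa using this.norm
    have : ∀ᶠ k in atTop, ‖y k‖ < ε / 2 :=
      hnorm.eventually (eventually_lt_nhds (by linarith : (0:ℝ) < ε / 2))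
    obtain ⟨k, hk⟩ := this.exists
    exact absurd (hx2 k) (not_lt.2 hk.le)
  obtain ⟨g, hg⟩ := not_forall.1 hnw
  simp only [map_zero] at hg
  obtain ⟨δ, hδ, ψ, hψmono, hψ⟩ := exists_subseq_of_not_tendsto hg
  -- the operator M → X*, S ↦ g ∘ S
  set J : ↥M →L[ℝ] StrongDual ℝ X :=
    ((ContinuousLinearMap.compL ℝ X Y ℝ) g).comp M.subtypeL with hJ
  have hJapp : ∀ (S : ↥M) (v : X), J S v = g ((S : X →L[ℝ] Y) v) := fun S v => rfl
  -- the candidate sequence in X*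
  set f : ℕ → StrongDual ℝ X := fun k => J (T (φ (ψ k))) with hf
  have hinj : Function.Injective (fun k => φ (ψ k)) :=
    (hφmono.comp hψmono).injective
  -- f is weakly p-summable
  have hfsum : WeaklyPSummable p f := by
    intro F
    have := hsum (F.comp J)
    have h2 := memℓp_comp_injective_aux hp hp' this hinj
    simpa [hf] using h2
  -- f is limited
  have hflim : LimitedSet (Set.range f) := by
    intro F hF
    have hΦ : WStarNull (X := ↥M) (fun n => (F n).comp J) := by
      intro S
      exact hF (J S)
    have := hlim (fun n => (F n).comp J) hΦ
    intro η hη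
    obtain ⟨N, hN⟩ := this η hη
    refine ⟨N, fun n hn a ha => ?_⟩
    obtain ⟨k, hk⟩ := ha
    have := hN n hn (T (φ (ψ k))) ⟨φ (ψ k), rfl⟩
    simpa [← hk, hf] using this
  -- so f is norm null, by pGP of X*
  have hfnull : NormNull f := hX f hflim hfsum
  -- but ‖f k‖ ≥ δ, contradiction
  have hlb : ∀ k, δ ≤ ‖f k‖ := by
    intro k
    have h1 : δ ≤ |f k (x (ψ k))| := by
      have := hψ k
      simpa [hf, hJapp, hy] using this
    have h2 : |f k (x (ψ k))| ≤ ‖f k‖ * ‖x (ψ k)‖ := by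
      simpa using (f k).le_opNorm (x (ψ k))
    have h3 : ‖f k‖ * ‖x (ψ k)‖ ≤ ‖f k‖ * 1 :=
      mul_le_mul_of_nonneg_left (hx1 (ψ k)).le (norm_nonneg _)
    linarith
  have : ∀ᶠ k in atTop, ‖f k‖ < δ := by
    have := hfnull.eventually (eventually_lt_nhds hδ)
    simpa [abs_of_nonneg (norm_nonneg _)] using this
  obtain ⟨k, hk⟩ := this.exists
  exact absurd (hlb k) (not_le.2 hk)
end
end
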